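/- arXiv:2208.06357 — 2 statements merged into one kernel-verified Lean document; each statement's English description precedes it below -/
import Mathlib

section
/- If C is a cycle with no exit in Γ and v = s(C), then the corner algebra v L_k(Γ) v is isomorphic to the Laurent polynomial algebra k[x, x⁻¹], with x corresponding to C*. -/
/-! Preamble: digraphs, paths, and Leavitt path algebras over a commutative ring. -/

structure DGraph : Type 1 where
  V : Type
  E : Type
  s : E → V
  t : E → V

namespace DGraph

/-- Generators of the Leavitt path algebra: vertices, arrows, ghost (dual) arrows. -/
inductive Gen (Γ : DGraph) : Type
  | vert : Γ.V → Gen Γ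
  | edge : Γ.E → Gen Γ
  | ghost : Γ.E → Gen Γ

variable (Γ : DGraph)

def IsSink (v : Γ.V) : Prop := ∀ e : Γ.E, Γ.s e ≠ v

def RowFinite : Prop := ∀ v : Γ.V, {e : Γ.E | Γ.s e = v}.Finite

/-- `IsWalkFrom v l` : the list of arrows `l` forms a path starting at `v`. -/
def IsWalkFrom : Γ.V → List Γ.E → Prop
  | _, [] => True
  | v, e :: l => Γ.s e = v ∧ IsWalkFrom (Γ.t e) l

/-- Target of a walk. -/
def walkTrg : Γ.V → List Γ.E → Γ.V
  | v, [] => v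
  | _, e :: l => walkTrg (Γ.t e) l

/-- A (finite) path in `Γ`: a source vertex together with a compatible list of arrows.
A path of length 0 is a single vertex. -/
structure Path (Γ : DGraph) : Type where
  src : Γ.V
  edges : List Γ.E
  valid : Γ.IsWalkFrom src edges

variable {Γ}

def Path.trg (p : Path Γ) : Γ.V := Γ.walkTrg p.src p.edges

/-- `q` is an initial segment of `p`, i.e. `p = q r`. -/
def IsInitialSegment (q p : Path Γ) : Prop := p.src = q.src ∧ q.edges <+: p.edges

/-- A cycle: a path of positive length from a vertex back to itself with pairwise
distinct sources of its arrows. -/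
def Path.IsCycle (p : Path Γ) : Prop :=
  p.edges ≠ [] ∧ p.trg = p.src ∧ (p.edges.map Γ.s).Nodup

/-- The vertex `v` is on the path `p`. -/
def Path.OnPath (p : Path Γ) (v : Γ.V) : Prop := p.src = v ∨ ∃ e ∈ p.edges, Γ.t e = v

/-- The path `p` has no exit: every arrow whose source is on `p` is an arrow of `p`. -/
def NoExit (p : Path Γ) : Prop := ∀ f : Γ.E, p.OnPath (Γ.s f) → f ∈ p.edges

variable (Γ)

/-- There is a path from `u` to `v`. -/
def Reaches (u v : Γ.V) : Prop := ∃ p : Path Γ, p.src = u ∧ p.trg = v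

/-- The cycles of `Γ` are pairwise disjoint: two cycles sharing a vertex coincide
(up to rotation, i.e. they have the same arrows). -/
def CyclesPairwiseDisjoint : Prop :=
  ∀ C D : Path Γ, C.IsCycle → D.IsCycle → (∃ v, C.OnPath v ∧ D.OnPath v) →
    C.edges.Perm D.edges

def Hereditary (H : Set Γ.V) : Prop := ∀ u v : Γ.V, u ∈ H → Γ.Reaches u v → v ∈ H

def Saturated (H : Set Γ.V) : Prop :=
  ∀ v : Γ.V, ¬ Γ.IsSink v → {e : Γ.E | Γ.s e = v}.Finite →
    (∀ e : Γ.E, Γ.s e = v → Γ.t e ∈ H) → v ∈ H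

/-- The full subgraph of `Γ` on a set `W` of vertices. -/
abbrev restrict (W : Set Γ.V) : DGraph where
  V := W
  E := {e : Γ.E // Γ.s e ∈ W ∧ Γ.t e ∈ W}
  s e := ⟨Γ.s e.1, e.2.1⟩
  t e := ⟨Γ.t e.1, e.2.2⟩

/-- The defining relations of the Leavitt path algebra, as a relation on the free
algebra on the generators: (V), (E), (CK1) and (CK2) (the latter imposed at every
vertex which is not a sink and emits finitely many arrows). -/
inductive LRel (k : Type) [CommRing k] (Γ : DGraph) :
    FreeAlgebra k (Gen Γ) → FreeAlgebra k (Gen Γ) → Prop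
  | vert_idem (v : Γ.V) :
      LRel k Γ (FreeAlgebra.ι k (Gen.vert v) * FreeAlgebra.ι k (Gen.vert v))
        (FreeAlgebra.ι k (Gen.vert v))
  | vert_orth (v w : Γ.V) : v ≠ w →
      LRel k Γ (FreeAlgebra.ι k (Gen.vert v) * FreeAlgebra.ι k (Gen.vert w)) 0
  | edge_src (e : Γ.E) :
      LRel k Γ (FreeAlgebra.ι k (Gen.vert (Γ.s e)) * FreeAlgebra.ι k (Gen.edge e))
        (FreeAlgebra.ι k (Gen.edge e))
  | edge_trg (e : Γ.E) :
      LRel k Γ (FreeAlgebra.ι k (Gen.edge e) * FreeAlgebra.ι k (Gen.vert (Γ.t e)))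
        (FreeAlgebra.ι k (Gen.edge e))
  | ghost_src (e : Γ.E) :
      LRel k Γ (FreeAlgebra.ι k (Gen.vert (Γ.t e)) * FreeAlgebra.ι k (Gen.ghost e))
        (FreeAlgebra.ι k (Gen.ghost e))
  | ghost_trg (e : Γ.E) :
      LRel k Γ (FreeAlgebra.ι k (Gen.ghost e) * FreeAlgebra.ι k (Gen.vert (Γ.s e)))
        (FreeAlgebra.ι k (Gen.ghost e))
  | ck1_same (e : Γ.E) :
      LRel k Γ (FreeAlgebra.ι k (Gen.ghost e) * FreeAlgebra.ι k (Gen.edge e))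
        (FreeAlgebra.ι k (Gen.vert (Γ.t e)))
  | ck1_diff (e f : Γ.E) : e ≠ f →
      LRel k Γ (FreeAlgebra.ι k (Gen.ghost e) * FreeAlgebra.ι k (Gen.edge f)) 0
  | ck2 (v : Γ.V) (h : {e : Γ.E | Γ.s e = v}.Finite) (hns : ¬ Γ.IsSink v) :
      LRel k Γ (FreeAlgebra.ι k (Gen.vert v))
        (∑ e ∈ h.toFinset, FreeAlgebra.ι k (Gen.edge e) * FreeAlgebra.ι k (Gen.ghost e))

/-- The (unitized) Leavitt path algebra of `Γ` over `k`.  For a digraph with finitely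
many vertices, see `LVF` below where additionally `1 = Σ v` is imposed; in general the
Leavitt path algebra proper is the (non-unital) subalgebra spanned by the nonempty
words in the generators, cf. `lpa`. -/
abbrev LV (k : Type) [CommRing k] (Γ : DGraph) : Type := RingQuot (LRel k Γ)

/-- The image of a generator in the Leavitt path algebra. -/
def genL (k : Type) [CommRing k] (Γ : DGraph) (g : Gen Γ) : LV k Γ :=
  RingQuot.mkAlgHom k (LRel k Γ) (FreeAlgebra.ι k g)

/-- For `Γ` with finitely many vertices, the relations of the Leavitt path algebra
together with `1 = Σ_{v ∈ V} v`. -/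
def LRelU (k : Type) [CommRing k] (Γ : DGraph) [Fintype Γ.V] :
    FreeAlgebra k (Gen Γ) → FreeAlgebra k (Gen Γ) → Prop :=
  fun a b => LRel k Γ a b ∨
    (a = 1 ∧ b = ∑ v : Γ.V, FreeAlgebra.ι k (Gen.vert v))

/-- The Leavitt path algebra of a digraph with finitely many vertices (a unital
algebra, with `1 = Σ_{v ∈ V} v`). -/
abbrev LVF (k : Type) [CommRing k] (Γ : DGraph) [Fintype Γ.V] : Type :=
  RingQuot (LRelU k Γ)

def genF (k : Type) [CommRing k] (Γ : DGraph) [Fintype Γ.V] (g : Gen Γ) : LVF k Γ :=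
  RingQuot.mkAlgHom k (LRelU k Γ) (FreeAlgebra.ι k g)

section Words

variable {k : Type} [CommRing k] {A : Type} [Ring A]

/-- The element `v e₁ ⋯ e_n` of an algebra `A`, given an interpretation `g` of the
generators. -/
def wordElem (g : Gen Γ → A) (v : Γ.V) (l : List Γ.E) : A :=
  g (Gen.vert v) * (l.map fun e => g (Gen.edge e)).prod

/-- The element `e_n* ⋯ e₁* v`. -/
def wordStar (g : Gen Γ → A) (v : Γ.V) (l : List Γ.E) : A :=
  (l.reverse.map fun e => g (Gen.ghost e)).prod * g (Gen.vert v)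

variable {Γ}

/-- The element of the algebra corresponding to a path `p`. -/
def pElem (g : Gen Γ → A) (p : Path Γ) : A := wordElem Γ g p.src p.edges

/-- The element of the algebra corresponding to the dual path `p*`. -/
def pStar (g : Gen Γ → A) (p : Path Γ) : A := wordStar Γ g p.src p.edges

/-- `Cⁿ` for `n ∈ ℤ`, with `C⁰ := s(C)` and `C⁻ⁿ := (C*)ⁿ`. -/
def cycPow (g : Gen Γ → A) (C : Path Γ) (n : ℤ) : A :=
  if n = 0 then g (Gen.vert C.src)
  else if 0 < n then pElem g C ^ n.toNat
  else pStar g C ^ (-n).toNat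

end Words

/-- The k-submodule of the unitized algebra `LV k Γ` spanned by the nonempty words
in the generators: this is the Leavitt path algebra proper (a two-sided ideal). -/
def lpa (k : Type) [CommRing k] (Γ : DGraph) : Submodule k (LV k Γ) :=
  Submodule.span k
    {x : LV k Γ | ∃ l : List (Gen Γ), l ≠ [] ∧ x = (l.map (genL k Γ)).prod}

/-- The image of the path algebra `kΓ` in `LV k Γ`: the k-span of the paths. -/
def pathSpan (k : Type) [CommRing k] (Γ : DGraph) : Submodule k (LV k Γ) :=
  Submodule.span k (Set.range (pElem (genL k Γ)))

/-- The right ideal generated by an element `a` of a ring `A` (a submodule for the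
right action of `A`, i.e. an `Aᵐᵒᵖ`-submodule). -/
def rIdeal (A : Type) [Ring A] (a : A) : Submodule Aᵐᵒᵖ A :=
  Submodule.span Aᵐᵒᵖ {a}

/-- A right `LV k Γ`-module (i.e. left `(LV k Γ)ᵐᵒᵖ`-module) is unital if
`M = M ⬝ L(Γ)`, equivalently every element is a finite sum of elements of `M·v·L`. -/
def IsUnitalMod (k : Type) [CommRing k] (Γ : DGraph) (M : Type) [AddCommGroup M]
    [Module (LV k Γ)ᵐᵒᵖ M] : Prop :=
  ∀ m : M, m ∈ Submodule.span (LV k Γ)ᵐᵒᵖ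
    {x : M | ∃ (v : Γ.V) (y : M), x = (MulOpposite.op (genL k Γ (Gen.vert v))) • y}

/-- One-step reduction of `Γ` at a loopless vertex `v`: paths of length two through
`v` become new arrows, and `v` together with all arrows touching it is deleted. -/
abbrev reduceAt (v : Γ.V) (hl : ∀ e : Γ.E, Γ.s e = v → Γ.t e ≠ v) : DGraph where
  V := {u : Γ.V // u ≠ v}
  E := {e : Γ.E // Γ.s e ≠ v ∧ Γ.t e ≠ v} ⊕
       {fg : Γ.E × Γ.E // Γ.t fg.1 = v ∧ Γ.s fg.2 = v}
  s := fun x => match x with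
    | Sum.inl e => ⟨Γ.s e.1, e.2.1⟩
    | Sum.inr fg => ⟨Γ.s fg.1.1, fun h => hl fg.1.1 h fg.2.1⟩
  t := fun x => match x with
    | Sum.inl e => ⟨Γ.t e.1, e.2.2⟩
    | Sum.inr fg => ⟨Γ.t fg.1.2, fun h => hl fg.1.2 fg.2.2 h⟩

/-- The homogeneous component of degree `g` of `LV k Γ` with respect to a degree
assignment `d` on the generators, with values in a group `G`. -/
def gcomp (k : Type) [CommRing k] (Γ : DGraph) {G : Type} [Group G]
    (d : Gen Γ → G) (g : G) : Submodule k (LV k Γ) :=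
  Submodule.span k
    {x : LV k Γ | ∃ l : List (Gen Γ), (l.map d).prod = g ∧ x = (l.map (genL k Γ)).prod}

/-- The universal degree assignment, with values in the free group on the arrows. -/
def dUniv (Γ : DGraph) : Gen Γ → FreeGroup Γ.E
  | Gen.vert _ => 1
  | Gen.edge e => FreeGroup.of e
  | Gen.ghost e => (FreeGroup.of e)⁻¹

end DGraph

/-- Gelfand–Kirillov dimension of an `F`-algebra (value in `ℝ≥0∞`):
`limsup_n log dim(Wⁿ)/log n` for a finite-dimensional generating subspace `W`
containing `1` (the supremum is taken over all such `W`; for a finitely generated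
algebra the value does not depend on the choice). -/
noncomputable def gkDim (F A : Type) [Field F] [Ring A] [Algebra F A] : ENNReal :=
  ⨆ W : {W : Submodule F A //
      FiniteDimensional F W ∧ (1 : A) ∈ W ∧ ∀ x : A, ∃ n : ℕ, x ∈ (W : Submodule F A) ^ n},
    Filter.limsup (fun n : ℕ =>
      ENNReal.ofReal
        (Real.log (Module.finrank F ↥((W : Submodule F A) ^ n)) / Real.log n))
      Filter.atTop

/-- A module is indecomposable if it is nonzero and admits no nontrivial direct sum
decomposition. -/
def IsIndecomposableModule (R M : Type) [Ring R] [AddCommGroup M] [Module R M] : Prop :=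
  Nontrivial M ∧ ∀ A B : Submodule R M, IsCompl A B → A = ⊥ ∨ B = ⊥


/-! ### Auxiliary development for STATEMENT 10 -/

namespace CornerAux
open DGraph
open scoped Classical

variable {Γ : DGraph}

/-! #### Generic walk lemmas -/

theorem walk_append : ∀ (l₁ : List Γ.E) {l₂ : List Γ.E} (u : Γ.V),
    Γ.IsWalkFrom u l₁ → Γ.IsWalkFrom (Γ.walkTrg u l₁) l₂ → Γ.IsWalkFrom u (l₁ ++ l₂)
  | [], _, u, _, h2 => h2
  | e :: l, _, u, h1, h2 => ⟨h1.1, walk_append l _ h1.2 h2⟩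

theorem walkTrg_append : ∀ (l₁ : List Γ.E) {l₂ : List Γ.E} (u : Γ.V),
    Γ.walkTrg u (l₁ ++ l₂) = Γ.walkTrg (Γ.walkTrg u l₁) l₂
  | [], _, u => rfl
  | e :: l, _, u => walkTrg_append l _

theorem walk_src_mem : ∀ (l : List Γ.E) (u : Γ.V), Γ.IsWalkFrom u l → ∀ e ∈ l,
    Γ.s e = u ∨ ∃ f ∈ l, Γ.t f = Γ.s e
  | [], _, _, e, he => absurd he (List.not_mem_nil)
  | f :: l, u, hw, e, he => by
    rcases List.mem_cons.mp he with he | he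
    · subst he; exact Or.inl hw.1
    · rcases walk_src_mem l (Γ.t f) hw.2 e he with h | ⟨g, hg, hgt⟩
      · exact Or.inr ⟨f, List.mem_cons_self, h ▸ rfl⟩
      · exact Or.inr ⟨g, List.mem_cons_of_mem _ hg, hgt⟩

theorem walk_succ : ∀ (l : List Γ.E) (u : Γ.V), Γ.IsWalkFrom u l → ∀ e ∈ l,
    (∃ f ∈ l, Γ.s f = Γ.t e) ∨ Γ.t e = Γ.walkTrg u l
  | [], _, _, e, he => absurd he (List.not_mem_nil)
  | f :: l, u, hw, e, he => by
    rcases List.mem_cons.mp he with he | he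
    · subst he
      match l, hw with
      | [], _ => exact Or.inr rfl
      | g :: l', hw => exact Or.inl ⟨g, List.mem_cons_of_mem _ (List.mem_cons_self), hw.2.1⟩
    · rcases walk_succ l (Γ.t f) hw.2 e he with ⟨g, hg, hgs⟩ | h
      · exact Or.inl ⟨g, List.mem_cons_of_mem _ hg, hgs⟩
      · exact Or.inr h

theorem walk_get_src : ∀ (l : List Γ.E) (u : Γ.V), Γ.IsWalkFrom u l →
    ∀ (i : ℕ) (h : i < l.length), Γ.s (l.get ⟨i, h⟩) = Γ.walkTrg u (l.take i)
  | [], _, _, i, h => absurd h (by simp)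
  | e :: l, u, hw, 0, h => hw.1
  | e :: l, u, hw, i + 1, h => by
    simpa [DGraph.walkTrg] using walk_get_src l (Γ.t e) hw.2 i (by simpa using h)

/-! #### Cycle lemmas -/

variable {C : Path Γ}

section Cycle
variable (hC : C.IsCycle) (hne : NoExit C)

theorem onPath_t {e : Γ.E} (he : e ∈ C.edges) : C.OnPath (Γ.t e) := Or.inr ⟨e, he, rfl⟩

theorem onPath_src : C.OnPath C.src := Or.inl rfl

include hC

theorem onPath_s {e : Γ.E} (he : e ∈ C.edges) : C.OnPath (Γ.s e) := by
  rcases walk_src_mem C.edges C.src C.valid e he with h | ⟨f, hf, hft⟩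
  · exact Or.inl h.symm
  · exact Or.inr ⟨f, hf, hft⟩

theorem src_inj {e f : Γ.E} (he : e ∈ C.edges) (hf : f ∈ C.edges) (h : Γ.s e = Γ.s f) :
    e = f := List.inj_on_of_nodup_map hC.2.2 he hf h

theorem exists_src {w : Γ.V} (hw : C.OnPath w) : ∃ e, e ∈ C.edges ∧ Γ.s e = w := by
  have hhead : ∀ x : Γ.V, x = C.src → ∃ e, e ∈ C.edges ∧ Γ.s e = x := by
    rintro x rfl
    obtain ⟨e, l, hl⟩ : ∃ e l, C.edges = e :: l := by
      cases h : C.edges with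
      | nil => exact absurd h hC.1
      | cons e l => exact ⟨e, l, rfl⟩
    have hv := C.valid
    rw [hl] at hv
    exact ⟨e, by rw [hl]; exact List.mem_cons_self, hv.1⟩
  rcases hw with hw | ⟨e, he, het⟩
  · exact hhead w hw.symm
  · subst het
    rcases walk_succ C.edges C.src C.valid e he with ⟨f, hf, hfs⟩ | h
    · exact ⟨f, hf, hfs⟩
    · exact hhead _ (h.trans hC.2.1)

/-- The unique arrow of the cycle with a given source. -/
noncomputable def nxt (w : Γ.V) : Γ.E :=
  if h : ∃ e, e ∈ C.edges ∧ Γ.s e = w then h.choose else C.edges.head hC.1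

theorem nxt_spec {w : Γ.V} (hw : C.OnPath w) :
    nxt hC w ∈ C.edges ∧ Γ.s (nxt hC w) = w := by
  rw [nxt, dif_pos (exists_src hC hw)]
  exact (exists_src hC hw).choose_spec

include hne in
theorem nxt_uniq {w : Γ.V} (hw : C.OnPath w) {f : Γ.E} (hf : Γ.s f = w) :
    f = nxt hC w := by
  have hfm : f ∈ C.edges := hne f (hf ▸ hw)
  exact src_inj hC hfm (nxt_spec hC hw).1 (hf.trans (nxt_spec hC hw).2.symm)

include hne in
theorem onPath_walkTrg : ∀ (l : List Γ.E) (w : Γ.V), C.OnPath w → Γ.IsWalkFrom w l →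
    C.OnPath (Γ.walkTrg w l)
  | [], w, hw, _ => hw
  | e :: l, w, hw, hwalk => by
    have he : e ∈ C.edges := hne e (hwalk.1 ▸ hw)
    exact onPath_walkTrg l (Γ.t e) (onPath_t he) hwalk.2

/-- The canonical walk of length `j` starting at a vertex of the cycle. -/
noncomputable def cwalk : ℕ → Γ.V → List Γ.E
  | 0, _ => []
  | j + 1, w => nxt hC w :: cwalk j (Γ.t (nxt hC w))

@[simp] theorem cwalk_zero (w : Γ.V) : cwalk hC 0 w = [] := rfl

@[simp] theorem cwalk_length : ∀ (j : ℕ) (w : Γ.V), (cwalk hC j w).length = j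
  | 0, _ => rfl
  | j + 1, w => by simp [cwalk, cwalk_length j]

theorem cwalk_walk : ∀ (j : ℕ) (w : Γ.V), C.OnPath w → Γ.IsWalkFrom w (cwalk hC j w)
  | 0, _, _ => trivial
  | j + 1, w, hw => ⟨(nxt_spec hC hw).2,
      cwalk_walk j _ (onPath_t (nxt_spec hC hw).1)⟩

theorem cwalk_mem : ∀ (j : ℕ) (w : Γ.V), C.OnPath w → ∀ e ∈ cwalk hC j w, e ∈ C.edges
  | 0, _, _, e, he => absurd he (List.not_mem_nil)
  | j + 1, w, hw, e, he => by
    rcases List.mem_cons.mp he with he | he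
    · subst he; exact (nxt_spec hC hw).1
    · exact cwalk_mem j _ (onPath_t (nxt_spec hC hw).1) e he

include hne in
theorem walk_eq_cwalk : ∀ (l : List Γ.E) (w : Γ.V), C.OnPath w → Γ.IsWalkFrom w l →
    l = cwalk hC l.length w
  | [], _, _, _ => rfl
  | e :: l, w, hw, hwalk => by
    have he : e = nxt hC w := nxt_uniq hC hne hw hwalk.1
    subst he
    simp only [List.length_cons, cwalk]
    exact congrArg _ (walk_eq_cwalk l _ (onPath_t (nxt_spec hC hw).1) hwalk.2)

/-- The `j`-th vertex along the cycle, starting from `C.src`. -/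
noncomputable def vtx (j : ℕ) : Γ.V := Γ.walkTrg C.src (cwalk hC j C.src)

@[simp] theorem vtx_zero : vtx hC 0 = C.src := rfl

theorem vtx_onPath (hne : NoExit C) (j : ℕ) : C.OnPath (vtx hC j) :=
  onPath_walkTrg hC hne _ _ onPath_src (cwalk_walk hC j _ onPath_src)

include hne in
theorem cwalk_add (a b : ℕ) :
    cwalk hC (a + b) C.src = cwalk hC a C.src ++ cwalk hC b (vtx hC a) := by
  have h1 : Γ.IsWalkFrom C.src (cwalk hC a C.src ++ cwalk hC b (vtx hC a)) :=
    walk_append _ _ (cwalk_walk hC a _ onPath_src)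
      (cwalk_walk hC b _ (vtx_onPath hC hne a))
  have h2 := walk_eq_cwalk hC hne _ _ onPath_src h1
  simpa using h2.symm

include hne in
theorem vtx_add (a b : ℕ) : vtx hC (a + b) = Γ.walkTrg (vtx hC a) (cwalk hC b (vtx hC a)) := by
  rw [vtx, cwalk_add hC hne, walkTrg_append]; rfl

include hne in
theorem cwalk_m : cwalk hC C.edges.length C.src = C.edges :=
  (walk_eq_cwalk hC hne C.edges C.src onPath_src C.valid).symm

include hne in
theorem vtx_m : vtx hC C.edges.length = C.src := by
  rw [vtx, cwalk_m hC hne]; exact hC.2.1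

include hne in
theorem vtx_mul_m (t : ℕ) : vtx hC (C.edges.length * t) = C.src := by
  induction t with
  | zero => simp
  | succ t ih =>
    have : C.edges.length * (t + 1) = C.edges.length * t + C.edges.length := by ring
    rw [this, vtx_add hC hne, ih]
    exact vtx_m hC hne

include hne in
theorem vtx_mod (j : ℕ) : vtx hC j = vtx hC (j % C.edges.length) := by
  conv_lhs => rw [← Nat.div_add_mod j C.edges.length]
  rw [vtx_add hC hne, vtx_mul_m hC hne]
  rfl

include hne in
theorem vtx_inj {i j : ℕ} (hi : i < C.edges.length) (hj : j < C.edges.length)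
    (h : vtx hC i = vtx hC j) : i = j := by
  have key : ∀ a (ha : a < C.edges.length),
      vtx hC a = Γ.s (C.edges.get ⟨a, ha⟩) := by
    intro a ha
    have hsplit : cwalk hC a C.src = C.edges.take a := by
      have h1 : C.edges.length = a + (C.edges.length - a) := by omega
      have h2 := cwalk_add hC hne a (C.edges.length - a)
      rw [← h1, cwalk_m hC hne] at h2
      have : (cwalk hC a C.src ++ cwalk hC (C.edges.length - a) (vtx hC a)).take a
          = cwalk hC a C.src := by
        rw [List.take_append]
        simp [cwalk_length]
      rw [← h2] at this
      exact this.symm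
    rw [vtx, hsplit, walk_get_src C.edges C.src C.valid a ha]
  rw [key i hi, key j hj] at h
  have hm : (C.edges.map Γ.s).Nodup := hC.2.2
  have hi' : i < (C.edges.map Γ.s).length := by simpa using hi
  have hj' : j < (C.edges.map Γ.s).length := by simpa using hj
  have hg : (C.edges.map Γ.s).get ⟨i, hi'⟩ = (C.edges.map Γ.s).get ⟨j, hj'⟩ := by
    simpa using h
  have := (hm.get_inj_iff).mp hg
  simpa using congrArg Fin.val this

end Cycle

/-! #### Algebra lemmas in the Leavitt path algebra -/

section Alg
variable (k : Type) [CommRing k] {Γ : DGraph}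

private theorem mk_rel {x y : FreeAlgebra k (Gen Γ)} (h : LRel k Γ x y) :
    RingQuot.mkAlgHom k (LRel k Γ) x = RingQuot.mkAlgHom k (LRel k Γ) y :=
  RingQuot.mkAlgHom_rel k h

/-- Vertex generator. -/
def gv (u : Γ.V) : LV k Γ := genL k Γ (Gen.vert u)
/-- Arrow generator. -/
def ge (e : Γ.E) : LV k Γ := genL k Γ (Gen.edge e)
/-- Ghost arrow generator. -/
def gg (e : Γ.E) : LV k Γ := genL k Γ (Gen.ghost e)

theorem gv_mul_gv (u : Γ.V) : gv k u * gv k u = gv k u := by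
  simpa [gv, genL, map_mul] using mk_rel k (LRel.vert_idem u)

theorem gv_mul_gv_ne {u w : Γ.V} (h : u ≠ w) : gv k u * gv k w = 0 := by
  simpa [gv, genL, map_mul] using mk_rel k (LRel.vert_orth u w h)

theorem gv_mul_ge (e : Γ.E) : gv k (Γ.s e) * ge k e = ge k e := by
  simpa [gv, ge, genL, map_mul] using mk_rel k (LRel.edge_src e)

theorem ge_mul_gv (e : Γ.E) : ge k e * gv k (Γ.t e) = ge k e := by
  simpa [gv, ge, genL, map_mul] using mk_rel k (LRel.edge_trg e)

theorem gv_mul_gg (e : Γ.E) : gv k (Γ.t e) * gg k e = gg k e := by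
  simpa [gv, gg, genL, map_mul] using mk_rel k (LRel.ghost_src e)

theorem gg_mul_gv (e : Γ.E) : gg k e * gv k (Γ.s e) = gg k e := by
  simpa [gv, gg, genL, map_mul] using mk_rel k (LRel.ghost_trg e)

theorem gg_mul_ge (e : Γ.E) : gg k e * ge k e = gv k (Γ.t e) := by
  simpa [gv, ge, gg, genL, map_mul] using mk_rel k (LRel.ck1_same e)

theorem gg_mul_ge_ne {e f : Γ.E} (h : e ≠ f) : gg k e * ge k f = 0 := by
  simpa [ge, gg, genL, map_mul] using mk_rel k (LRel.ck1_diff e f h)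

theorem ck2_eq (u : Γ.V) (h : {e : Γ.E | Γ.s e = u}.Finite) (hns : ¬ Γ.IsSink u) :
    gv k u = ∑ e ∈ h.toFinset, ge k e * gg k e := by
  simpa [gv, ge, gg, genL, map_sum, map_mul] using mk_rel k (LRel.ck2 u h hns)

variable {C : Path Γ}

theorem ge_mul_gg_cyc (hrf : Γ.RowFinite) (hC : C.IsCycle) (hne : NoExit C)
    {e : Γ.E} (he : e ∈ C.edges) : ge k e * gg k e = gv k (Γ.s e) := by
  have hns : ¬ Γ.IsSink (Γ.s e) := fun h => h e rfl
  have hset : (hrf (Γ.s e)).toFinset = {e} := by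
    ext f
    simp only [Set.Finite.mem_toFinset, Set.mem_setOf_eq, Finset.mem_singleton]
    constructor
    · intro hf
      have hfm : f ∈ C.edges := hne f (hf ▸ onPath_s hC he)
      exact src_inj hC hfm he hf
    · rintro rfl; rfl
  rw [ck2_eq k (Γ.s e) (hrf (Γ.s e)) hns, hset, Finset.sum_singleton]

/-- Product of arrow generators along a list. -/
def el (l : List Γ.E) : LV k Γ := (l.map (ge k)).prod
/-- Product of ghost generators along the reverse of a list. -/
def gl (l : List Γ.E) : LV k Γ := (l.reverse.map (gg k)).prod

@[simp] theorem el_nil : el k ([] : List Γ.E) = 1 := rfl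
@[simp] theorem gl_nil : gl k ([] : List Γ.E) = 1 := rfl

theorem el_cons (e : Γ.E) (l : List Γ.E) : el k (e :: l) = ge k e * el k l := by
  simp [el]

theorem gl_cons (e : Γ.E) (l : List Γ.E) : gl k (e :: l) = gl k l * gg k e := by
  simp [gl]

theorem el_append (l₁ l₂ : List Γ.E) : el k (l₁ ++ l₂) = el k l₁ * el k l₂ := by
  simp [el]

theorem gl_append (l₁ l₂ : List Γ.E) : gl k (l₁ ++ l₂) = gl k l₂ * gl k l₁ := by
  simp [gl]

theorem gv_el {l : List Γ.E} (hl : l ≠ []) {w : Γ.V} (hw : Γ.IsWalkFrom w l) :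
    gv k w * el k l = el k l := by
  match l, hl with
  | e :: l, _ =>
    rw [el_cons, ← mul_assoc, ← hw.1, gv_mul_ge]

theorem el_gv : ∀ {l : List Γ.E}, l ≠ [] → ∀ {w : Γ.V}, Γ.IsWalkFrom w l →
    el k l * gv k (Γ.walkTrg w l) = el k l
  | [], hl, _, _ => absurd rfl hl
  | [e], _, w, hw => by
    show el k [e] * gv k (Γ.t e) = el k [e]
    rw [el_cons, el_nil, mul_one, ge_mul_gv]
  | e :: f :: l, _, w, hw => by
    rw [el_cons, show Γ.walkTrg w (e :: f :: l) = Γ.walkTrg (Γ.t e) (f :: l) from rfl,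
      mul_assoc, el_gv (by simp) hw.2]

theorem gl_gv {l : List Γ.E} (hl : l ≠ []) {w : Γ.V} (hw : Γ.IsWalkFrom w l) :
    gl k l * gv k w = gl k l := by
  match l, hl with
  | e :: l, _ =>
    rw [gl_cons, mul_assoc, ← hw.1, gg_mul_gv]

theorem gv_gl : ∀ {l : List Γ.E}, l ≠ [] → ∀ {w : Γ.V}, Γ.IsWalkFrom w l →
    gv k (Γ.walkTrg w l) * gl k l = gl k l
  | [], hl, _, _ => absurd rfl hl
  | [e], _, w, hw => by
    show gv k (Γ.t e) * gl k [e] = gl k [e]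
    rw [gl_cons, gl_nil, one_mul, gv_mul_gg]
  | e :: f :: l, _, w, hw => by
    rw [gl_cons, show Γ.walkTrg w (e :: f :: l) = Γ.walkTrg (Γ.t e) (f :: l) from rfl,
      ← mul_assoc, gv_gl (by simp) hw.2]

theorem gl_el : ∀ {l : List Γ.E}, l ≠ [] → ∀ {w : Γ.V}, Γ.IsWalkFrom w l →
    gl k l * el k l = gv k (Γ.walkTrg w l)
  | [], hl, _, _ => absurd rfl hl
  | [e], _, w, hw => by
    show gl k [e] * el k [e] = gv k (Γ.t e)
    rw [gl_cons, gl_nil, one_mul, el_cons, el_nil, mul_one, gg_mul_ge]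
  | e :: f :: l, _, w, hw => by
    have h1 : gl k (e :: f :: l) * el k (e :: f :: l)
        = gl k (f :: l) * (gg k e * ge k e * el k (f :: l)) := by
      rw [gl_cons, el_cons]; simp [mul_assoc]
    rw [h1, gg_mul_ge, gv_el k (by simp) hw.2, gl_el (by simp) hw.2]
    rfl

theorem el_gl (hrf : Γ.RowFinite) (hC : C.IsCycle) (hne : NoExit C) :
    ∀ {l : List Γ.E}, l ≠ [] → ∀ {w : Γ.V}, Γ.IsWalkFrom w l →
    (∀ e ∈ l, e ∈ C.edges) → el k l * gl k l = gv k w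
  | [], hl, _, _, _ => absurd rfl hl
  | [e], _, w, hw, hmem => by
    rw [el_cons, el_nil, mul_one, gl_cons, gl_nil, one_mul,
      ge_mul_gg_cyc k hrf hC hne (hmem e (by simp)), hw.1]
  | e :: f :: l, _, w, hw, hmem => by
    have h1 : el k (e :: f :: l) * gl k (e :: f :: l)
        = ge k e * (el k (f :: l) * gl k (f :: l)) * gg k e := by
      rw [gl_cons, el_cons]; simp [mul_assoc]
    rw [h1, el_gl hrf hC hne (by simp) hw.2 (fun x hx => hmem x (List.mem_cons_of_mem _ hx)),
      ge_mul_gv, ge_mul_gg_cyc k hrf hC hne (hmem e (by simp)), hw.1]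

end Alg

/-! #### The cycle powers -/

section Cyc
variable (k : Type) [CommRing k] {Γ : DGraph} (C : Path Γ)
variable (hrf : Γ.RowFinite) (hC : C.IsCycle) (hne : NoExit C)

/-- The element `C` of the Leavitt path algebra. -/
noncomputable def PP : LV k Γ := gv k C.src * el k C.edges
/-- The element `C*` of the Leavitt path algebra. -/
noncomputable def QQ : LV k Γ := gl k C.edges * gv k C.src

theorem PP_eq : pElem (genL k Γ) C = PP k C := rfl
theorem QQ_eq : pStar (genL k Γ) C = QQ k C := rfl

include hC

theorem vP : gv k C.src * PP k C = PP k C := by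
  rw [PP, ← mul_assoc, gv_mul_gv]

theorem Pv : PP k C * gv k C.src = PP k C := by
  have htrg : Γ.walkTrg C.src C.edges = C.src := hC.2.1
  have h2 : el k C.edges * gv k C.src = el k C.edges := by
    rw [← htrg]; exact el_gv k hC.1 C.valid
  rw [PP, mul_assoc, h2]

theorem Qv : QQ k C * gv k C.src = QQ k C := by
  rw [QQ, mul_assoc, gv_mul_gv]

theorem vQ : gv k C.src * QQ k C = QQ k C := by
  have htrg : Γ.walkTrg C.src C.edges = C.src := hC.2.1
  have h2 : gv k C.src * gl k C.edges = gl k C.edges := by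
    rw [← htrg]; exact gv_gl k hC.1 C.valid
  rw [QQ, ← mul_assoc, h2]

theorem QP : QQ k C * PP k C = gv k C.src := by
  have htrg : Γ.walkTrg C.src C.edges = C.src := hC.2.1
  rw [QQ, PP, mul_assoc, ← mul_assoc (gv k C.src), gv_mul_gv,
    gv_el k hC.1 C.valid]
  have h2 := gl_el k hC.1 C.valid
  rw [htrg] at h2
  exact h2

include hrf hne in
theorem PQ : PP k C * QQ k C = gv k C.src := by
  rw [PP, QQ, mul_assoc, ← mul_assoc (el k C.edges),
    el_gl k hrf hC hne hC.1 C.valid (fun _ h => h), gv_mul_gv, gv_mul_gv]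

omit hC

/-- `Cⁿ` for `n : ℤ`. -/
noncomputable def uu (n : ℤ) : LV k Γ :=
  if n = 0 then gv k C.src else if 0 < n then PP k C ^ n.toNat else QQ k C ^ (-n).toNat

@[simp] theorem uu_zero : uu k C 0 = gv k C.src := rfl

theorem uu_one : uu k C 1 = PP k C := by simp [uu]

theorem uu_negone : uu k C (-1) = QQ k C := by norm_num [uu]

theorem uu_pos {n : ℤ} (hn : 0 < n) : uu k C n = PP k C ^ n.toNat := by
  simp [uu, hn, hn.ne']

theorem uu_neg {n : ℤ} (hn : n < 0) : uu k C n = QQ k C ^ (-n).toNat := by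
  simp [uu, hn.ne, not_lt_of_gt hn]

include hC in
theorem v_uu (n : ℤ) : gv k C.src * uu k C n = uu k C n := by
  rcases lt_trichotomy n 0 with hn | rfl | hn
  · rw [uu_neg k C hn]
    obtain ⟨b, hb⟩ : ∃ b, (-n).toNat = b + 1 := ⟨(-n).toNat - 1, by omega⟩
    rw [hb, pow_succ', ← mul_assoc, vQ k C hC]
  · rw [uu_zero, gv_mul_gv]
  · rw [uu_pos k C hn]
    obtain ⟨b, hb⟩ : ∃ b, n.toNat = b + 1 := ⟨n.toNat - 1, by omega⟩
    rw [hb, pow_succ', ← mul_assoc, vP k C hC]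

include hrf hC hne in
theorem P_uu (n : ℤ) : PP k C * uu k C n = uu k C (n + 1) := by
  rcases lt_trichotomy n 0 with hn | rfl | hn
  · rw [uu_neg k C hn]
    obtain ⟨b, hb⟩ : ∃ b, (-n).toNat = b + 1 := ⟨(-n).toNat - 1, by omega⟩
    rw [hb, pow_succ', ← mul_assoc, PQ k C hrf hC hne]
    rcases Nat.eq_zero_or_pos b with rfl | hb0
    · rw [pow_zero, mul_one]
      have hn1 : n = -1 := by omega
      subst hn1; norm_num
    · have h2 : QQ k C ^ b = uu k C (n + 1) := by
        rw [uu_neg k C (by omega)]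
        congr 1
        omega
      rw [h2, v_uu k C hC]
  · rw [uu_zero, Pv k C hC, show (0:ℤ) + 1 = 1 from rfl, uu_one]
  · rw [uu_pos k C hn, uu_pos k C (by omega), ← pow_succ']
    congr 1
    omega

include hrf hC hne in
theorem Q_uu (n : ℤ) : QQ k C * uu k C n = uu k C (n - 1) := by
  rcases lt_trichotomy n 0 with hn | rfl | hn
  · rw [uu_neg k C hn, uu_neg k C (by omega), ← pow_succ']
    congr 1
    omega
  · rw [uu_zero, Qv k C hC, show (0:ℤ) - 1 = -1 by norm_num, uu_negone]
  · rw [uu_pos k C hn]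
    obtain ⟨b, hb⟩ : ∃ b, n.toNat = b + 1 := ⟨n.toNat - 1, by omega⟩
    rw [hb, pow_succ', ← mul_assoc, QP k C hC]
    rcases Nat.eq_zero_or_pos b with rfl | hb0
    · rw [pow_zero, mul_one]
      have hn1 : n = 1 := by omega
      subst hn1; norm_num
    · have h2 : PP k C ^ b = uu k C (n - 1) := by
        rw [uu_pos k C (by omega)]
        congr 1
        omega
      rw [h2, v_uu k C hC]

include hrf hC hne in
theorem uu_mul (a b : ℤ) : uu k C a * uu k C b = uu k C (a + b) := by
  induction a using Int.induction_on with
  | zero => rw [uu_zero, v_uu k C hC, zero_add]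
  | succ a ih =>
    rw [← P_uu k C hrf hC hne a, mul_assoc, ih, P_uu k C hrf hC hne]
    congr 1
    ring
  | pred a ih =>
    rw [show (-(a : ℤ) - 1) = (-a) - 1 from rfl, ← Q_uu k C hrf hC hne (-a), mul_assoc, ih,
      Q_uu k C hrf hC hne]
    congr 1
    ring

include hrf hC hne in
theorem uu_v (n : ℤ) : uu k C n * gv k C.src = uu k C n := by
  have := uu_mul k C hrf hC hne n 0
  rwa [uu_zero, add_zero] at this

end Cyc

/-! #### The corner is spanned by the cycle powers -/

section Surj
variable (k : Type) [CommRing k] {Γ : DGraph} (C : Path Γ)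
variable (hrf : Γ.RowFinite) (hC : C.IsCycle) (hne : NoExit C)

theorem gv_gv (u w : Γ.V) : gv k u * gv k w = if w = u then gv k u else 0 := by
  split_ifs with h
  · rw [h]; exact gv_mul_gv k u
  · exact gv_mul_gv_ne k fun hh => h hh.symm

theorem ge_gv (e : Γ.E) (u : Γ.V) : ge k e * gv k u = if u = Γ.t e then ge k e else 0 := by
  split_ifs with h
  · subst h; exact ge_mul_gv k e
  · rw [← ge_mul_gv k e, mul_assoc, gv_gv, if_neg h, mul_zero]

theorem gg_gv (e : Γ.E) (u : Γ.V) : gg k e * gv k u = if u = Γ.s e then gg k e else 0 := by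
  split_ifs with h
  · subst h; exact gg_mul_gv k e
  · rw [← gg_mul_gv k e, mul_assoc, gv_gv, if_neg h, mul_zero]

theorem gg_ge (e f : Γ.E) : gg k e * ge k f = if e = f then gv k (Γ.t e) else 0 := by
  split_ifs with h
  · subst h; exact gg_mul_ge k e
  · exact gg_mul_ge_ne k h

include hrf hC hne in
theorem uu_gv (n : ℤ) (u : Γ.V) :
    uu k C n * gv k u = if u = C.src then uu k C n else 0 := by
  split_ifs with h
  · subst h; exact uu_v k C hrf hC hne n
  · rw [← uu_v k C hrf hC hne n, mul_assoc, gv_gv, if_neg h, mul_zero]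

/-- The spanning elements `Cⁿ · (cycle segment) · q*` of `v·L`. -/
noncomputable def Bel (n : ℤ) (j : ℕ) (q : List Γ.E) : LV k Γ :=
  uu k C n * el k (cwalk hC j C.src) * gl k q

theorem Bel_nil (n : ℤ) (j : ℕ) : Bel k C hC n j [] = uu k C n * el k (cwalk hC j C.src) := by
  rw [Bel, gl_nil, mul_one]

theorem Bel_cons (n : ℤ) (j : ℕ) (e : Γ.E) (r : List Γ.E) :
    Bel k C hC n j (e :: r) = Bel k C hC n j r * gg k e := by
  rw [Bel, Bel, gl_cons]
  simp [mul_assoc]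

theorem cwalk_one (w : Γ.V) : cwalk hC 1 w = [nxt hC w] := rfl

include hne in
theorem cwalk_succ' (j : ℕ) :
    cwalk hC (j + 1) C.src = cwalk hC j C.src ++ [nxt hC (vtx hC j)] := by
  have := cwalk_add hC hne j 1
  rwa [cwalk_one] at this

include hne in
theorem vtx_succ_t (j : ℕ) : Γ.t (nxt hC (vtx hC j)) = vtx hC (j + 1) := by
  show _ = Γ.walkTrg C.src (cwalk hC (j + 1) C.src)
  rw [cwalk_succ' C hC hne j, walkTrg_append]
  rfl

include hne in
theorem Bel_nil_succ (n : ℤ) (j : ℕ) :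
    Bel k C hC n (j + 1) [] = Bel k C hC n j [] * ge k (nxt hC (vtx hC j)) := by
  rw [Bel_nil, Bel_nil, cwalk_succ' C hC hne, el_append, el_cons, el_nil, mul_one, mul_assoc]

include hrf hne in
theorem Bel_gv (n : ℤ) (j : ℕ) (q : List Γ.E) (w u : Γ.V) (hq : Γ.IsWalkFrom w q)
    (htq : Γ.walkTrg w q = vtx hC j) :
    Bel k C hC n j q * gv k u = if u = w then Bel k C hC n j q else 0 := by
  rcases q with _ | ⟨e, r⟩
  · have hw : w = vtx hC j := htq
    subst hw
    rcases j with _ | j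
    · simp only [Bel_nil, cwalk_zero, el_nil, mul_one]
      rw [uu_gv k C hrf hC hne]
      simp only [vtx_zero]; congr
    · rw [Bel_nil_succ k C hC hne, mul_assoc, ge_gv, vtx_succ_t C hC hne j, mul_ite, mul_zero,
        ← Bel_nil_succ k C hC hne]
  · rw [Bel_cons, mul_assoc, gg_gv, hq.1, mul_ite, mul_zero, ← Bel_cons]

include hrf hne in
theorem Bel_gg (n : ℤ) (j : ℕ) (q : List Γ.E) (w : Γ.V) (hq : Γ.IsWalkFrom w q)
    (htq : Γ.walkTrg w q = vtx hC j) (e : Γ.E) :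
    Bel k C hC n j q * gg k e = if Γ.t e = w then Bel k C hC n j (e :: q) else 0 := by
  rw [← gv_mul_gg, ← mul_assoc, Bel_gv k C hrf hC hne n j q w _ hq htq]
  split_ifs with h
  · exact (Bel_cons k C hC n j e q).symm
  · exact zero_mul _

include hrf hne in
theorem Bel_cons_ge (n : ℤ) (j : ℕ) (e : Γ.E) (r : List Γ.E) (w : Γ.V)
    (hq : Γ.IsWalkFrom w (e :: r)) (htq : Γ.walkTrg w (e :: r) = vtx hC j) (f : Γ.E) :
    Bel k C hC n j (e :: r) * ge k f = if e = f then Bel k C hC n j r else 0 := by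
  rw [Bel_cons, mul_assoc, gg_ge, mul_ite, mul_zero]
  rcases eq_or_ne e f with rfl | h
  · rw [if_pos rfl, if_pos rfl,
      Bel_gv k C hrf hC hne n j r (Γ.t e) (Γ.t e) hq.2 htq, if_pos rfl]
  · rw [if_neg h, if_neg h]

include hrf hne in
theorem Bel_nil_ge_ne (n : ℤ) (j : ℕ) (f : Γ.E) (hf : Γ.s f ≠ vtx hC j) :
    Bel k C hC n j [] * ge k f = 0 := by
  rw [← gv_mul_ge, ← mul_assoc,
    Bel_gv k C hrf hC hne n j [] (vtx hC j) _ trivial rfl, if_neg hf, zero_mul]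

include hne in
theorem Bel_nil_ge (n : ℤ) (j : ℕ) (f : Γ.E) (hf : Γ.s f = vtx hC j) :
    Bel k C hC n j [] * ge k f = Bel k C hC n (j + 1) [] := by
  have : f = nxt hC (vtx hC j) := nxt_uniq hC hne (vtx_onPath hC hne j) hf
  subst this
  exact (Bel_nil_succ k C hC hne n j).symm

include hC in
theorem glL_QQ : gl k C.edges = QQ k C := (gl_gv k hC.1 C.valid).symm

include hrf hne in
theorem Bel_norm (n : ℤ) : Bel k C hC n C.edges.length [] = Bel k C hC (n + 1) 0 [] := by
  rw [Bel_nil, Bel_nil, cwalk_m hC hne, cwalk_zero, el_nil, mul_one,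
    ← uu_v k C hrf hC hne n, mul_assoc,
    show gv k C.src * el k C.edges = PP k C from rfl, ← uu_one k C,
    uu_mul k C hrf hC hne]

/-- The spanning set of `v·L`. -/
noncomputable def Bset : Set (LV k Γ) :=
  {x | ∃ (n : ℤ) (j : ℕ) (q : List Γ.E) (w : Γ.V), j < C.edges.length ∧
    Γ.IsWalkFrom w q ∧ Γ.walkTrg w q = vtx hC j ∧ x = Bel k C hC n j q}

include hC in
theorem gv_mem_Bset : gv k C.src ∈ Bset k C hC := by
  refine ⟨0, 0, [], vtx hC 0, List.length_pos_iff.mpr hC.1, trivial, rfl, ?_⟩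
  rw [Bel_nil, cwalk_zero, el_nil, mul_one, uu_zero]

include hrf hne in
theorem Bset_gen (g : Gen Γ) {x : LV k Γ} (hx : x ∈ Bset k C hC) :
    x * genL k Γ g ∈ Submodule.span k (Bset k C hC) := by
  obtain ⟨n, j, q, w, hj, hq, htq, rfl⟩ := hx
  cases g with
  | vert u =>
    rw [show genL k Γ (Gen.vert u) = gv k u from rfl,
      Bel_gv k C hrf hC hne n j q w u hq htq]
    split_ifs
    · exact Submodule.subset_span ⟨n, j, q, w, hj, hq, htq, rfl⟩
    · exact zero_mem _
  | edge f =>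
    rw [show genL k Γ (Gen.edge f) = ge k f from rfl]
    rcases q with _ | ⟨e, r⟩
    · have hw : w = vtx hC j := htq
      by_cases hs : Γ.s f = vtx hC j
      · rw [Bel_nil_ge k C hC hne n j f hs]
        by_cases hjm : j + 1 = C.edges.length
        · rw [hjm, Bel_norm k C hrf hC hne]
          exact Submodule.subset_span
            ⟨n + 1, 0, [], vtx hC 0, List.length_pos_iff.mpr hC.1, trivial, rfl, rfl⟩
        · have hlt : j + 1 < C.edges.length := by omega
          exact Submodule.subset_span ⟨n, j + 1, [], vtx hC (j + 1), hlt, trivial, rfl, rfl⟩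
      · rw [Bel_nil_ge_ne k C hrf hC hne n j f hs]
        exact zero_mem _
    · rw [Bel_cons_ge k C hrf hC hne n j e r w hq htq f]
      split_ifs
      · exact Submodule.subset_span ⟨n, j, r, Γ.t e, hj, hq.2, htq, rfl⟩
      · exact zero_mem _
  | ghost e =>
    rw [show genL k Γ (Gen.ghost e) = gg k e from rfl,
      Bel_gg k C hrf hC hne n j q w hq htq e]
    split_ifs with h
    · exact Submodule.subset_span
        ⟨n, j, e :: q, Γ.s e, hj, ⟨rfl, h ▸ hq⟩, by
          show Γ.walkTrg (Γ.t e) q = vtx hC j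
          rw [h]; exact htq, rfl⟩
    · exact zero_mem _

include hrf hne in
theorem Mspan_mul_gen (g : Gen Γ) {x : LV k Γ} (hx : x ∈ Submodule.span k (Bset k C hC)) :
    x * genL k Γ g ∈ Submodule.span k (Bset k C hC) := by
  induction hx using Submodule.span_induction with
  | mem y hy => exact Bset_gen k C hrf hC hne g hy
  | zero => rw [zero_mul]; exact zero_mem _
  | add a b _ _ ha hb => rw [add_mul]; exact add_mem ha hb
  | smul r a _ ha => rw [smul_mul_assoc]; exact Submodule.smul_mem _ r ha

include hrf hne in
theorem Mspan_mul (y : LV k Γ) {x : LV k Γ} (hx : x ∈ Submodule.span k (Bset k C hC)) :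
    x * y ∈ Submodule.span k (Bset k C hC) := by
  obtain ⟨z, rfl⟩ := RingQuot.mkAlgHom_surjective k (LRel k Γ) y
  induction z using FreeAlgebra.induction generalizing x with
  | grade0 r =>
    rw [AlgHom.commutes, ← Algebra.commutes, ← Algebra.smul_def]
    exact Submodule.smul_mem _ r hx
  | grade1 g => exact Mspan_mul_gen k C hrf hC hne g hx
  | mul a b ha hb =>
    rw [map_mul, ← mul_assoc]
    exact hb (ha hx)
  | add a b ha hb =>
    rw [map_add, mul_add]
    exact add_mem (ha hx) (hb hx)

include hrf hne in
theorem uu_gl_cwalk (t : ℕ) (n : ℤ) :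
    uu k C n * gl k (cwalk hC (C.edges.length * t) C.src) = uu k C (n - t) := by
  induction t generalizing n with
  | zero => simp
  | succ t ih =>
    have hsplit : cwalk hC (C.edges.length * (t + 1)) C.src
        = C.edges ++ cwalk hC (C.edges.length * t) C.src := by
      have h1 := cwalk_add hC hne C.edges.length (C.edges.length * t)
      rw [vtx_m hC hne, cwalk_m hC hne] at h1
      rw [show C.edges.length * (t + 1) = C.edges.length + C.edges.length * t by ring]
      exact h1
    rw [hsplit, gl_append, ← mul_assoc, ih, glL_QQ k C hC, ← uu_negone k C,
      uu_mul k C hrf hC hne]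
    congr 1
    push_cast
    ring

include hrf hne in
theorem Bel_v_mem {x : LV k Γ} (hx : x ∈ Bset k C hC) :
    x * gv k C.src ∈ Submodule.span k (Set.range (uu k C)) := by
  obtain ⟨n, j, q, w, hj, hq, htq, rfl⟩ := hx
  rw [Bel_gv k C hrf hC hne n j q w _ hq htq]
  split_ifs with hw
  · subst hw
    have hm : 0 < C.edges.length := List.length_pos_iff.mpr hC.1
    have hqq : q = cwalk hC q.length C.src := walk_eq_cwalk hC hne q C.src onPath_src hq
    have h2 : vtx hC q.length = vtx hC j := by
      rw [vtx, ← hqq]; exact htq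
    have hsj : q.length % C.edges.length = j := by
      refine vtx_inj hC hne (Nat.mod_lt _ hm) hj ?_
      rw [← vtx_mod hC hne]; exact h2
    have hdecomp : q = cwalk hC (C.edges.length * (q.length / C.edges.length)) C.src
        ++ cwalk hC j C.src := by
      have h3 := cwalk_add hC hne (C.edges.length * (q.length / C.edges.length)) j
      rw [vtx_mul_m hC hne] at h3
      have hlen := (Nat.div_add_mod q.length C.edges.length).symm
      rw [hsj] at hlen
      conv_lhs => rw [hqq, hlen]
      exact h3
    have hmid : uu k C n * el k (cwalk hC j C.src) * gl k (cwalk hC j C.src) = uu k C n := by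
      rcases Nat.eq_zero_or_pos j with rfl | hj0
      · simp
      · have hnil : cwalk hC j C.src ≠ [] := by
          intro h
          have := cwalk_length hC j C.src
          rw [h] at this
          simp at this
          omega
        rw [mul_assoc, el_gl k hrf hC hne hnil (cwalk_walk hC j C.src onPath_src)
          (cwalk_mem hC j C.src onPath_src), uu_v k C hrf hC hne]
    rw [Bel, hdecomp, gl_append, ← mul_assoc, hmid, uu_gl_cwalk k C hrf hC hne]
    exact Submodule.subset_span (Set.mem_range_self _)
  · exact zero_mem _

include hrf hne in
theorem span_mul_v {x : LV k Γ} (hx : x ∈ Submodule.span k (Bset k C hC)) :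
    x * gv k C.src ∈ Submodule.span k (Set.range (uu k C)) := by
  induction hx using Submodule.span_induction with
  | mem y hy => exact Bel_v_mem k C hrf hC hne hy
  | zero => rw [zero_mul]; exact zero_mem _
  | add a b _ _ ha hb => rw [add_mul]; exact add_mem ha hb
  | smul r a _ ha => rw [smul_mul_assoc]; exact Submodule.smul_mem _ r ha

include hrf hC hne in
theorem corner_mem (a : LV k Γ) :
    gv k C.src * a * gv k C.src ∈ Submodule.span k (Set.range (uu k C)) :=
  span_mul_v k C hrf hC hne
    (Mspan_mul k C hrf hC hne a (Submodule.subset_span (gv_mem_Bset k C hC)))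

end Surj

/-! #### A representation of the Leavitt path algebra separating the cycle powers -/

section Rep
variable (k : Type) [CommRing k] {Γ : DGraph} (C : Path Γ)
variable (hrf : Γ.RowFinite) (hC : C.IsCycle) (hne : NoExit C)

theorem path_ext {p q : Path Γ} (h1 : p.src = q.src) (h2 : p.edges = q.edges) : p = q := by
  cases p; cases q
  dsimp at h1 h2
  subst h1; subst h2
  rfl

/-- Normal forms for eventually-cyclic infinite paths: finite paths avoiding the
cycle, whose target lies on the cycle. -/
def XX : Type := {p : Path Γ // (∀ e ∈ p.edges, e ∉ C.edges) ∧ C.OnPath p.trg}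

/-- The empty path at a vertex of the cycle. -/
def exX (w : Γ.V) (hw : C.OnPath w) : XX C :=
  ⟨⟨w, [], trivial⟩, fun e he => absurd he (List.not_mem_nil), hw⟩

theorem exX_congr {w w' : Γ.V} (h : w = w') (hw : C.OnPath w) (hw' : C.OnPath w') :
    exX C w hw = exX C w' hw' := by subst h; rfl

/-- Prepending an arrow not on the cycle. -/
def consX (e : Γ.E) (x : XX C) (h1 : Γ.t e = x.1.src) (h2 : e ∉ C.edges) : XX C :=
  ⟨⟨Γ.s e, e :: x.1.edges, ⟨rfl, by rw [h1]; exact x.1.valid⟩⟩,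
   fun f hf => by
     rcases List.mem_cons.mp hf with rfl | hf
     · exact h2
     · exact x.2.1 f hf,
   by
     show C.OnPath (Γ.walkTrg (Γ.t e) x.1.edges)
     rw [h1]
     exact x.2.2⟩

/-- Removing the first arrow. -/
def tailX (x : XX C) (e : Γ.E) (r : List Γ.E) (hx : x.1.edges = e :: r) : XX C :=
  ⟨⟨Γ.t e, r, by have hv := x.1.valid; rw [hx] at hv; exact hv.2⟩,
   fun f hf => x.2.1 f (by rw [hx]; exact List.mem_cons_of_mem _ hf),
   by
     have h := x.2.2
     show C.OnPath (Γ.walkTrg (Γ.t e) r)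
     have h2 : Γ.walkTrg x.1.src x.1.edges = Γ.walkTrg (Γ.t e) r := by rw [hx]; rfl
     rw [← h2]
     exact h⟩

include hC hne in
theorem nil_of_src_on (x : XX C) (hsrc : C.OnPath x.1.src) : x.1.edges = [] := by
  cases hx : x.1.edges with
  | nil => rfl
  | cons f r =>
    have hv := x.1.valid
    rw [hx] at hv
    have hon : C.OnPath (Γ.s f) := by rw [hv.1]; exact hsrc
    exact absurd (hne f hon) (x.2.1 f (by rw [hx]; exact List.mem_cons_self))

theorem eq_exX (x : XX C) {w : Γ.V} (hw : C.OnPath w) (hsrc : x.1.src = w)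
    (hnil : x.1.edges = []) : x = exX C w hw :=
  Subtype.ext (path_ext hsrc hnil)

/-- The action of the generators on normal forms with a winding marker. -/
noncomputable def act : Gen Γ → (XX C × ℤ) → ((XX C × ℤ) →₀ k)
  | Gen.vert u => fun z => if z.1.1.src = u then Finsupp.single z 1 else 0
  | Gen.edge e => fun z =>
      if h1 : Γ.t e = z.1.1.src then
        if h2 : e ∈ C.edges then
          Finsupp.single
            (exX C (Γ.s e) (onPath_s hC h2), z.2 + if Γ.s e = C.src then 1 else 0) 1
        else Finsupp.single (consX C e z.1 h1 h2, z.2) 1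
      else 0
  | Gen.ghost e => fun z =>
      if hx : ∃ r, z.1.1.edges = e :: r then
        Finsupp.single (tailX C z.1 e hx.choose hx.choose_spec, z.2) 1
      else if h : z.1.1.edges = [] ∧ e ∈ C.edges ∧ Γ.s e = z.1.1.src then
        Finsupp.single
          (exX C (Γ.t e) (onPath_t h.2.1), z.2 - if Γ.s e = C.src then 1 else 0) 1
      else 0

theorem act_vert (u : Γ.V) (z : XX C × ℤ) :
    act k C hC (Gen.vert u) z = if z.1.1.src = u then Finsupp.single z 1 else 0 := rfl

theorem act_edge_not {e : Γ.E} {z : XX C × ℤ} (h : ¬ Γ.t e = z.1.1.src) :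
    act k C hC (Gen.edge e) z = 0 := by
  show dite _ _ _ = 0
  rw [dif_neg h]

theorem act_edge_mem {e : Γ.E} {z : XX C × ℤ} (h1 : Γ.t e = z.1.1.src) (h2 : e ∈ C.edges) :
    act k C hC (Gen.edge e) z = Finsupp.single
      (exX C (Γ.s e) (onPath_s hC h2), z.2 + if Γ.s e = C.src then 1 else 0) 1 := by
  show dite _ _ _ = _
  rw [dif_pos h1, dif_pos h2]

theorem act_edge_notmem {e : Γ.E} {z : XX C × ℤ} (h1 : Γ.t e = z.1.1.src)
    (h2 : e ∉ C.edges) :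
    act k C hC (Gen.edge e) z = Finsupp.single (consX C e z.1 h1 h2, z.2) 1 := by
  show dite _ _ _ = _
  rw [dif_pos h1, dif_neg h2]

theorem act_ghost_cons_eq {e : Γ.E} {r : List Γ.E} {z : XX C × ℤ}
    (hx : z.1.1.edges = e :: r) :
    act k C hC (Gen.ghost e) z = Finsupp.single (tailX C z.1 e r hx, z.2) 1 := by
  show dite _ _ _ = _
  have hex : ∃ r', z.1.1.edges = e :: r' := ⟨r, hx⟩
  rw [dif_pos hex]
  have hr : hex.choose = r := by
    have h2 : e :: hex.choose = e :: r := hex.choose_spec.symm.trans hx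
    injection h2
  have ht : tailX C z.1 e hex.choose hex.choose_spec = tailX C z.1 e r hx :=
    Subtype.ext (path_ext rfl hr)
  rw [ht]

theorem act_ghost_cons_ne {e f : Γ.E} {r : List Γ.E} {z : XX C × ℤ}
    (hx : z.1.1.edges = f :: r) (hfe : f ≠ e) :
    act k C hC (Gen.ghost e) z = 0 := by
  show dite _ _ _ = _
  rw [dif_neg, dif_neg]
  · rintro ⟨hnil, -⟩
    rw [hx] at hnil
    cases hnil
  · rintro ⟨r', hr'⟩
    rw [hx] at hr'
    exact hfe (List.cons.injEq _ _ _ _ ▸ hr').1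

theorem act_ghost_nil_mem {e : Γ.E} {z : XX C × ℤ} (hx : z.1.1.edges = [])
    (h2 : e ∈ C.edges) (h3 : Γ.s e = z.1.1.src) :
    act k C hC (Gen.ghost e) z = Finsupp.single
      (exX C (Γ.t e) (onPath_t h2), z.2 - if Γ.s e = C.src then 1 else 0) 1 := by
  show dite _ _ _ = _
  rw [dif_neg, dif_pos ⟨hx, h2, h3⟩]
  rintro ⟨r', hr'⟩
  rw [hx] at hr'
  cases hr'

theorem act_ghost_nil_not {e : Γ.E} {z : XX C × ℤ} (hx : z.1.1.edges = [])
    (h : ¬ (e ∈ C.edges ∧ Γ.s e = z.1.1.src)) :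
    act k C hC (Gen.ghost e) z = 0 := by
  show dite _ _ _ = _
  rw [dif_neg, dif_neg]
  · rintro ⟨-, hb, hc⟩
    exact h ⟨hb, hc⟩
  · rintro ⟨r', hr'⟩
    rw [hx] at hr'
    cases hr'

/-- The generators acting linearly. -/
noncomputable def rho0 (g : Gen Γ) : Module.End k ((XX C × ℤ) →₀ k) :=
  Finsupp.lift _ k _ (act k C hC g)

theorem rho0_single (g : Gen Γ) (z : XX C × ℤ) (a : k) :
    rho0 k C hC g (Finsupp.single z a) = a • act k C hC g z := by
  rw [rho0, Finsupp.lift_apply]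
  exact Finsupp.sum_single_index (zero_smul _ _)

end Rep

section Rep2
variable (k : Type) [CommRing k] {Γ : DGraph} (C : Path Γ)
variable (hrf : Γ.RowFinite) (hC : C.IsCycle) (hne : NoExit C)

@[simp] theorem exX_src (w : Γ.V) (hw : C.OnPath w) : (exX C w hw).1.src = w := rfl
@[simp] theorem exX_edges (w : Γ.V) (hw : C.OnPath w) : (exX C w hw).1.edges = [] := rfl
@[simp] theorem consX_src (e : Γ.E) (x : XX C) (h1 : Γ.t e = x.1.src) (h2 : e ∉ C.edges) :
    (consX C e x h1 h2).1.src = Γ.s e := rfl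
@[simp] theorem consX_edges (e : Γ.E) (x : XX C) (h1 : Γ.t e = x.1.src) (h2 : e ∉ C.edges) :
    (consX C e x h1 h2).1.edges = e :: x.1.edges := rfl
@[simp] theorem tailX_src (x : XX C) (e : Γ.E) (r : List Γ.E) (hx : x.1.edges = e :: r) :
    (tailX C x e r hx).1.src = Γ.t e := rfl
@[simp] theorem tailX_edges (x : XX C) (e : Γ.E) (r : List Γ.E) (hx : x.1.edges = e :: r) :
    (tailX C x e r hx).1.edges = r := rfl

theorem act_vert_src {u : Γ.V} {z : XX C × ℤ} (h : z.1.1.src = u) :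
    act k C hC (Gen.vert u) z = Finsupp.single z 1 := by
  rw [act_vert, if_pos h]

theorem act_vert_ne {u : Γ.V} {z : XX C × ℤ} (h : ¬ z.1.1.src = u) :
    act k C hC (Gen.vert u) z = 0 := by
  rw [act_vert, if_neg h]

theorem mulsingle (g g' : Gen Γ) (z z' : XX C × ℤ) (a : k)
    (h : act k C hC g' z = Finsupp.single z' 1) :
    (rho0 k C hC g * rho0 k C hC g') (Finsupp.single z a) = a • act k C hC g z' := by
  rw [Module.End.mul_apply, rho0_single, h, Finsupp.smul_single', mul_one, rho0_single]

theorem mulsingle0 (g g' : Gen Γ) (z : XX C × ℤ) (a : k) (h : act k C hC g' z = 0) :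
    (rho0 k C hC g * rho0 k C hC g') (Finsupp.single z a) = 0 := by
  rw [Module.End.mul_apply, rho0_single, h, smul_zero, map_zero]

include hrf hC hne in
theorem hArel : ∀ ⦃x y : FreeAlgebra k (Gen Γ)⦄, LRel k Γ x y →
    FreeAlgebra.lift k (rho0 k C hC) x = FreeAlgebra.lift k (rho0 k C hC) y := by
  intro x y h
  cases h with
  | vert_idem v =>
    simp only [map_mul, FreeAlgebra.lift_ι_apply]
    refine Finsupp.lhom_ext fun z a => ?_
    by_cases h : z.1.1.src = v
    · rw [mulsingle k C hC _ _ _ _ _ (act_vert_src k C hC h), rho0_single]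
    · rw [mulsingle0 k C hC _ _ _ _ (act_vert_ne k C hC h), rho0_single,
        act_vert_ne k C hC h, smul_zero]
  | vert_orth v w hvw =>
    simp only [map_mul, FreeAlgebra.lift_ι_apply, map_zero]
    refine Finsupp.lhom_ext fun z a => ?_
    rw [LinearMap.zero_apply]
    by_cases h : z.1.1.src = w
    · rw [mulsingle k C hC _ _ _ _ _ (act_vert_src k C hC h),
        act_vert_ne k C hC (by rw [h]; exact fun hh => hvw hh.symm), smul_zero]
    · rw [mulsingle0 k C hC _ _ _ _ (act_vert_ne k C hC h)]
  | edge_src e =>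
    simp only [map_mul, FreeAlgebra.lift_ι_apply]
    refine Finsupp.lhom_ext fun z a => ?_
    by_cases h1 : Γ.t e = z.1.1.src
    · by_cases h2 : e ∈ C.edges
      · rw [mulsingle k C hC _ _ _ _ _ (act_edge_mem k C hC h1 h2),
          rho0_single, act_edge_mem k C hC h1 h2]
        simp only [act_vert, exX_src, eq_self_iff_true, if_true]
      · rw [mulsingle k C hC _ _ _ _ _ (act_edge_notmem k C hC h1 h2),
          rho0_single, act_edge_notmem k C hC h1 h2]
        simp only [act_vert, consX_src, eq_self_iff_true, if_true]
    · rw [mulsingle0 k C hC _ _ _ _ (act_edge_not k C hC h1), rho0_single,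
        act_edge_not k C hC h1, smul_zero]
  | edge_trg e =>
    simp only [map_mul, FreeAlgebra.lift_ι_apply]
    refine Finsupp.lhom_ext fun z a => ?_
    by_cases h : z.1.1.src = Γ.t e
    · rw [mulsingle k C hC _ _ _ _ _ (act_vert_src k C hC h), rho0_single]
    · rw [mulsingle0 k C hC _ _ _ _ (act_vert_ne k C hC h), rho0_single,
        act_edge_not k C hC (fun hh => h hh.symm), smul_zero]
  | ghost_src e =>
    simp only [map_mul, FreeAlgebra.lift_ι_apply]
    refine Finsupp.lhom_ext fun z a => ?_
    rcases hx : z.1.1.edges with _ | ⟨f, r⟩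
    · by_cases h : e ∈ C.edges ∧ Γ.s e = z.1.1.src
      · rw [mulsingle k C hC _ _ _ _ _ (act_ghost_nil_mem k C hC hx h.1 h.2),
          rho0_single, act_ghost_nil_mem k C hC hx h.1 h.2]
        simp only [act_vert, exX_src, eq_self_iff_true, if_true]
      · rw [mulsingle0 k C hC _ _ _ _ (act_ghost_nil_not k C hC hx h), rho0_single,
          act_ghost_nil_not k C hC hx h, smul_zero]
    · by_cases hfe : f = e
      · subst hfe
        rw [mulsingle k C hC _ _ _ _ _ (act_ghost_cons_eq k C hC hx),
          rho0_single, act_ghost_cons_eq k C hC hx]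
        simp only [act_vert, tailX_src, eq_self_iff_true, if_true]
      · rw [mulsingle0 k C hC _ _ _ _ (act_ghost_cons_ne k C hC hx hfe), rho0_single,
          act_ghost_cons_ne k C hC hx hfe, smul_zero]
  | ghost_trg e =>
    simp only [map_mul, FreeAlgebra.lift_ι_apply]
    refine Finsupp.lhom_ext fun z a => ?_
    by_cases h : z.1.1.src = Γ.s e
    · rw [mulsingle k C hC _ _ _ _ _ (act_vert_src k C hC h), rho0_single]
    · rw [mulsingle0 k C hC _ _ _ _ (act_vert_ne k C hC h), rho0_single]
      rcases hx : z.1.1.edges with _ | ⟨f, r⟩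
      · rw [act_ghost_nil_not k C hC hx (fun hh => h hh.2.symm), smul_zero]
      · have hfe : f ≠ e := by
          rintro rfl
          have hv := z.1.1.valid
          rw [hx] at hv
          exact h hv.1.symm
        rw [act_ghost_cons_ne k C hC hx hfe, smul_zero]
  | ck1_same e =>
    simp only [map_mul, FreeAlgebra.lift_ι_apply]
    refine Finsupp.lhom_ext fun z a => ?_
    by_cases h1 : Γ.t e = z.1.1.src
    · by_cases h2 : e ∈ C.edges
      · have hnil : z.1.1.edges = [] :=
          nil_of_src_on C hC hne z.1 (by rw [← h1]; exact onPath_t h2)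
        have hzx : z.1 = exX C (Γ.t e) (onPath_t h2) := eq_exX C z.1 _ h1.symm hnil
        rw [mulsingle k C hC _ _ _ _ _ (act_edge_mem k C hC h1 h2),
          act_ghost_nil_mem k C hC rfl h2 rfl, rho0_single, act_vert_src k C hC h1.symm]
        have hz : ((exX C (Γ.t e) (onPath_t h2),
            z.2 + (if Γ.s e = C.src then (1:ℤ) else 0) - (if Γ.s e = C.src then (1:ℤ) else 0))
            : XX C × ℤ) = z := by
          rw [add_sub_cancel_right, ← hzx]
        rw [hz]
      · have hcons : (consX C e z.1 h1 h2).1.edges = e :: z.1.1.edges := rfl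
        have htail : tailX C (consX C e z.1 h1 h2) e z.1.1.edges hcons = z.1 :=
          Subtype.ext (path_ext h1 rfl)
        rw [mulsingle k C hC _ _ _ _ _ (act_edge_notmem k C hC h1 h2),
          act_ghost_cons_eq k C hC hcons, rho0_single, act_vert_src k C hC h1.symm, htail]
    · rw [mulsingle0 k C hC _ _ _ _ (act_edge_not k C hC h1), rho0_single,
        act_vert_ne k C hC (fun hh => h1 hh.symm), smul_zero]
  | ck1_diff e f hef =>
    simp only [map_mul, FreeAlgebra.lift_ι_apply, map_zero]
    refine Finsupp.lhom_ext fun z a => ?_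
    rw [LinearMap.zero_apply]
    by_cases h1 : Γ.t f = z.1.1.src
    · by_cases h2 : f ∈ C.edges
      · rw [mulsingle k C hC _ _ _ _ _ (act_edge_mem k C hC h1 h2),
          act_ghost_nil_not k C hC (exX_edges C (Γ.s f) (onPath_s hC h2))
            (fun hh => hef (src_inj hC hh.1 h2 hh.2)), smul_zero]
      · rw [mulsingle k C hC _ _ _ _ _ (act_edge_notmem k C hC h1 h2),
          act_ghost_cons_ne k C hC (consX_edges C f z.1 h1 h2) (fun hh => hef hh.symm),
          smul_zero]
    · rw [mulsingle0 k C hC _ _ _ _ (act_edge_not k C hC h1)]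
  | ck2 v hfin hns =>
    simp only [map_sum, map_mul, FreeAlgebra.lift_ι_apply]
    refine Finsupp.lhom_ext fun z a => ?_
    rw [LinearMap.sum_apply, rho0_single]
    by_cases hsrc : z.1.1.src = v
    · rw [act_vert_src k C hC hsrc, Finsupp.smul_single', mul_one]
      rcases hx : z.1.1.edges with _ | ⟨f, r⟩
      · have hon : C.OnPath z.1.1.src := by
          have h := z.1.2.2
          have h2 : z.1.1.trg = z.1.1.src := by
            show Γ.walkTrg z.1.1.src z.1.1.edges = z.1.1.src
            rw [hx]
            rfl
          rw [h2] at h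
          exact h
        have hspec := nxt_spec hC hon
        have hzx2 : z.1 = exX C (Γ.s (nxt hC z.1.1.src)) (onPath_s hC hspec.1) :=
          eq_exX C z.1 (onPath_s hC hspec.1) hspec.2.symm hx
        have hcmem : nxt hC z.1.1.src ∈ hfin.toFinset := by
          rw [Set.Finite.mem_toFinset]
          show Γ.s (nxt hC z.1.1.src) = v
          rw [hspec.2, hsrc]
        have hmain : ∀ e ∈ hfin.toFinset, e ≠ nxt hC z.1.1.src →
            (rho0 k C hC (Gen.edge e) * rho0 k C hC (Gen.ghost e)) (Finsupp.single z a)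
              = 0 := by
          intro e hemem hene
          rw [Set.Finite.mem_toFinset] at hemem
          have hse : Γ.s e = z.1.1.src := by
            have h3 : Γ.s e = v := hemem
            rw [h3]
            exact hsrc.symm
          exact absurd (nxt_uniq hC hne hon hse) hene
        rw [Finset.sum_eq_single _ hmain (fun hcon => absurd hcmem hcon),
          mulsingle k C hC _ _ _ _ _ (act_ghost_nil_mem k C hC hx hspec.1 hspec.2),
          act_edge_mem k C hC rfl hspec.1, Finsupp.smul_single', mul_one]
        have hz : ((exX C (Γ.s (nxt hC z.1.1.src)) (onPath_s hC hspec.1),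
            z.2 - (if Γ.s (nxt hC z.1.1.src) = C.src then (1:ℤ) else 0)
              + (if Γ.s (nxt hC z.1.1.src) = C.src then (1:ℤ) else 0)) : XX C × ℤ) = z := by
          rw [sub_add_cancel, ← hzx2]
        rw [hz]
      · have hfr : f ∈ z.1.1.edges := by rw [hx]; exact List.mem_cons_self
        have hfC : f ∉ C.edges := z.1.2.1 f hfr
        have hv := z.1.1.valid
        rw [hx] at hv
        have hfmem : f ∈ hfin.toFinset := by
          rw [Set.Finite.mem_toFinset]
          show Γ.s f = v
          rw [hv.1, hsrc]
        have hmain : ∀ e ∈ hfin.toFinset, e ≠ f →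
            (rho0 k C hC (Gen.edge e) * rho0 k C hC (Gen.ghost e)) (Finsupp.single z a)
              = 0 := fun e _ hene =>
          mulsingle0 k C hC _ _ _ _ (act_ghost_cons_ne k C hC hx (fun hh => hene hh.symm))
        have hcons : consX C f (tailX C z.1 f r hx) rfl hfC = z.1 :=
          Subtype.ext (path_ext (p := (consX C f (tailX C z.1 f r hx) rfl hfC).1) (q := z.1.1) (by exact hv.1) (by
            show f :: r = _; rw [hx]))
        rw [Finset.sum_eq_single _ hmain (fun hcon => absurd hfmem hcon),
          mulsingle k C hC _ _ _ _ _ (act_ghost_cons_eq k C hC hx),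
          act_edge_notmem k C hC rfl hfC, Finsupp.smul_single', mul_one, hcons]
    · rw [act_vert_ne k C hC hsrc, smul_zero]
      symm
      refine Finset.sum_eq_zero fun e hemem => ?_
      rw [Set.Finite.mem_toFinset] at hemem
      have hse : Γ.s e = v := hemem
      rcases hx : z.1.1.edges with _ | ⟨f, r⟩
      · exact mulsingle0 k C hC _ _ _ _ (act_ghost_nil_not k C hC hx
          (fun hh => hsrc (by rw [← hh.2]; exact hse)))
      · have hv := z.1.1.valid
        rw [hx] at hv
        have hfe : f ≠ e := by
          rintro rfl
          exact hsrc (by rw [← hv.1]; exact hse)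
        exact mulsingle0 k C hC _ _ _ _ (act_ghost_cons_ne k C hC hx hfe)

end Rep2

/-! #### Evaluation of the representation on cycle powers, and the final isomorphism -/

section Final
variable (k : Type) [CommRing k] {Γ : DGraph} (C : Path Γ)
variable (hrf : Γ.RowFinite) (hC : C.IsCycle) (hne : NoExit C)

/-- The representation of the Leavitt path algebra. -/
noncomputable def rrho : LV k Γ →ₐ[k] Module.End k ((XX C × ℤ) →₀ k) :=
  RingQuot.liftAlgHom k ⟨FreeAlgebra.lift k (rho0 k C hC), hArel k C hrf hC hne⟩

theorem rrho_gen (g : Gen Γ) :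
    rrho k C hrf hC hne (genL k Γ g) = rho0 k C hC g := by
  rw [genL, rrho, RingQuot.liftAlgHom_mkAlgHom_apply, FreeAlgebra.lift_ι_apply]

/-- Weight of a list of arrows: the number of times it passes the base point. -/
noncomputable def cnt : List Γ.E → ℤ
  | [] => 0
  | e :: l => (if Γ.s e = C.src then 1 else 0) + cnt l

theorem cnt_zero : ∀ {l : List Γ.E}, (∀ e ∈ l, Γ.s e ≠ C.src) → cnt C l = 0
  | [], _ => rfl
  | e :: l, h => by
    show (if Γ.s e = C.src then (1:ℤ) else 0) + cnt C l = 0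
    rw [if_neg (h e (List.mem_cons_self)), cnt_zero fun f hf =>
      h f (List.mem_cons_of_mem _ hf), add_zero]

include hC in
theorem cnt_L : cnt C C.edges = 1 := by
  obtain ⟨e, L', hL⟩ : ∃ e L', C.edges = e :: L' := by
    cases h : C.edges with
    | nil => exact absurd h hC.1
    | cons e l => exact ⟨e, l, rfl⟩
  have hv := C.valid
  rw [hL] at hv
  have hnd : C.edges.Nodup := hC.2.2.of_map _
  rw [hL] at hnd
  have hz : ∀ f ∈ L', Γ.s f ≠ C.src := by
    intro f hf hsf
    have : f = e := src_inj hC (by rw [hL]; exact List.mem_cons_of_mem _ hf)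
      (by rw [hL]; exact List.mem_cons_self) (by rw [hsf, hv.1])
    subst this
    exact (List.nodup_cons.mp hnd).1 hf
  rw [hL]
  show (if Γ.s e = C.src then (1:ℤ) else 0) + cnt C L' = 1
  rw [if_pos hv.1, cnt_zero C hz, add_zero]

include hrf hC hne in
theorem rho_gl_eval : ∀ (l : List Γ.E) (w : Γ.V) (hw : C.OnPath w)
    (hwalk : Γ.IsWalkFrom w l) (hmem : ∀ e ∈ l, e ∈ C.edges) (t : ℤ),
    rrho k C hrf hC hne (gl k l) (Finsupp.single ((exX C w hw, t) : XX C × ℤ) 1)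
      = Finsupp.single ((exX C (Γ.walkTrg w l)
          (onPath_walkTrg hC hne l w hw hwalk), t - cnt C l) : XX C × ℤ) 1
  | [], w, hw, hwalk, hmem, t => by
    show (rrho k C hrf hC hne) (1 : LV k Γ) _ = _
    rw [map_one, Module.End.one_apply]
    show _ = Finsupp.single ((exX C w _, t - cnt C []) : XX C × ℤ) 1
    rw [show cnt C [] = 0 from rfl, sub_zero]
  | e :: r, w, hw, hwalk, hmem, t => by
    have hmem' : ∀ f ∈ r, f ∈ C.edges := fun f hf => hmem f (List.mem_cons_of_mem _ hf)
    rw [gl_cons, map_mul, Module.End.mul_apply,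
      show gg k e = genL k Γ (Gen.ghost e) from rfl, rrho_gen, rho0_single,
      act_ghost_nil_mem k C hC (z := ((exX C w hw, t) : XX C × ℤ)) rfl
        (hmem e (List.mem_cons_self)) hwalk.1, one_smul,
      rho_gl_eval r (Γ.t e) (onPath_t (hmem e (List.mem_cons_self))) hwalk.2 hmem' _]
    show Finsupp.single ((exX C (Γ.walkTrg (Γ.t e) r) _,
        t - (if Γ.s e = C.src then (1:ℤ) else 0) - cnt C r) : XX C × ℤ) 1 = _
    rw [sub_sub]
    rfl

include hrf hC hne in
theorem rho_el_eval : ∀ (l : List Γ.E) (w : Γ.V) (hw : C.OnPath w)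
    (hwalk : Γ.IsWalkFrom w l) (hmem : ∀ e ∈ l, e ∈ C.edges) (t : ℤ),
    rrho k C hrf hC hne (el k l) (Finsupp.single ((exX C (Γ.walkTrg w l)
        (onPath_walkTrg hC hne l w hw hwalk), t) : XX C × ℤ) 1)
      = Finsupp.single ((exX C w hw, t + cnt C l) : XX C × ℤ) 1
  | [], w, hw, hwalk, hmem, t => by
    show (rrho k C hrf hC hne) (1 : LV k Γ) _ = _
    rw [map_one, Module.End.one_apply]
    show _ = Finsupp.single ((exX C w _, t + cnt C []) : XX C × ℤ) 1
    rw [show cnt C [] = 0 from rfl, add_zero]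
    rfl
  | e :: r, w, hw, hwalk, hmem, t => by
    have hmem' : ∀ f ∈ r, f ∈ C.edges := fun f hf => hmem f (List.mem_cons_of_mem _ hf)
    have hhead : e ∈ C.edges := hmem e (List.mem_cons_self)
    rw [el_cons, map_mul, Module.End.mul_apply]
    have hstep := rho_el_eval r (Γ.t e) (onPath_t hhead) hwalk.2 hmem' t
    rw [show (Finsupp.single ((exX C (Γ.walkTrg w (e :: r))
          (onPath_walkTrg hC hne (e :: r) w hw hwalk), t) : XX C × ℤ) (1:k))
        = Finsupp.single ((exX C (Γ.walkTrg (Γ.t e) r)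
          (onPath_walkTrg hC hne r (Γ.t e) (onPath_t hhead) hwalk.2), t) : XX C × ℤ) 1
        from rfl, hstep,
      show ge k e = genL k Γ (Gen.edge e) from rfl, rrho_gen, rho0_single,
      act_edge_mem k C hC (z := ((exX C (Γ.t e) (onPath_t hhead), t + cnt C r) : XX C × ℤ))
        rfl hhead, one_smul]
    have hmark : t + cnt C r + (if Γ.s e = C.src then (1:ℤ) else 0)
        = t + ((if Γ.s e = C.src then (1:ℤ) else 0) + cnt C r) := by ring
    rw [exX_congr C hwalk.1 (onPath_s hC hhead) hw]
    show Finsupp.single ((exX C w hw, t + cnt C r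
        + (if Γ.s e = C.src then (1:ℤ) else 0)) : XX C × ℤ) 1 = _
    rw [hmark]
    rfl

include hrf hC hne in
theorem rho_P_eval (t : ℤ) :
    rrho k C hrf hC hne (PP k C) (Finsupp.single ((exX C C.src onPath_src, t) : XX C × ℤ) 1)
      = Finsupp.single ((exX C C.src onPath_src, t + 1) : XX C × ℤ) 1 := by
  rw [PP, map_mul, Module.End.mul_apply]
  have htrg : Γ.walkTrg C.src C.edges = C.src := hC.2.1
  have hx : exX C (Γ.walkTrg C.src C.edges)
      (onPath_walkTrg hC hne C.edges C.src onPath_src C.valid) = exX C C.src onPath_src :=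
    exX_congr C htrg _ _
  conv_lhs => rw [← hx]
  rw [rho_el_eval k C hrf hC hne C.edges C.src onPath_src C.valid (fun _ h => h) t,
    show gv k C.src = genL k Γ (Gen.vert C.src) from rfl, rrho_gen, rho0_single,
    act_vert_src k C hC (u := C.src)
      (z := ((exX C C.src onPath_src, t + cnt C C.edges) : XX C × ℤ)) rfl,
    one_smul, cnt_L C hC]

include hrf hC hne in
theorem rho_Q_eval (t : ℤ) :
    rrho k C hrf hC hne (QQ k C) (Finsupp.single ((exX C C.src onPath_src, t) : XX C × ℤ) 1)
      = Finsupp.single ((exX C C.src onPath_src, t - 1) : XX C × ℤ) 1 := by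
  have htrg : Γ.walkTrg C.src C.edges = C.src := hC.2.1
  rw [QQ, map_mul, Module.End.mul_apply,
    show gv k C.src = genL k Γ (Gen.vert C.src) from rfl, rrho_gen, rho0_single,
    act_vert_src k C hC (u := C.src) (z := ((exX C C.src onPath_src, t) : XX C × ℤ)) rfl,
    one_smul,
    rho_gl_eval k C hrf hC hne C.edges C.src onPath_src C.valid (fun _ h => h) t,
    cnt_L C hC, exX_congr C htrg (onPath_walkTrg hC hne C.edges C.src onPath_src C.valid)
      onPath_src]

include hrf hC hne in
theorem rho_uu_eval (n t : ℤ) :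
    rrho k C hrf hC hne (uu k C n) (Finsupp.single ((exX C C.src onPath_src, t) : XX C × ℤ) 1)
      = Finsupp.single ((exX C C.src onPath_src, t + n) : XX C × ℤ) 1 := by
  have hP : ∀ (a : ℕ) (t : ℤ), rrho k C hrf hC hne (PP k C ^ a)
      (Finsupp.single ((exX C C.src onPath_src, t) : XX C × ℤ) 1)
      = Finsupp.single ((exX C C.src onPath_src, t + a) : XX C × ℤ) 1 := by
    intro a
    induction a with
    | zero => intro t; rw [pow_zero, map_one, Module.End.one_apply]; norm_num
    | succ a ih =>
      intro t
      rw [pow_succ', map_mul, Module.End.mul_apply, ih, rho_P_eval k C hrf hC hne]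
      have : t + (a:ℤ) + 1 = t + ((a:ℕ) + 1 : ℕ) := by push_cast; ring
      rw [this]
  have hQ : ∀ (a : ℕ) (t : ℤ), rrho k C hrf hC hne (QQ k C ^ a)
      (Finsupp.single ((exX C C.src onPath_src, t) : XX C × ℤ) 1)
      = Finsupp.single ((exX C C.src onPath_src, t - a) : XX C × ℤ) 1 := by
    intro a
    induction a with
    | zero => intro t; rw [pow_zero, map_one, Module.End.one_apply]; norm_num
    | succ a ih =>
      intro t
      rw [pow_succ', map_mul, Module.End.mul_apply, ih, rho_Q_eval k C hrf hC hne]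
      have : t - (a:ℤ) - 1 = t - ((a:ℕ) + 1 : ℕ) := by push_cast; ring
      rw [this]
  rcases lt_trichotomy n 0 with hn | rfl | hn
  · rw [uu_neg k C hn, hQ]
    have : t - ((-n).toNat : ℤ) = t + n := by omega
    rw [this]
  · rw [uu_zero, show gv k C.src = genL k Γ (Gen.vert C.src) from rfl, rrho_gen, rho0_single,
      act_vert_src k C hC (u := C.src) (z := ((exX C C.src onPath_src, t) : XX C × ℤ)) rfl,
      one_smul, add_zero]
  · rw [uu_pos k C hn, hP]
    have : t + (n.toNat : ℤ) = t + n := by omega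
    rw [this]

/-- The linear map underlying the isomorphism. -/
noncomputable def FF : LaurentPolynomial k →ₗ[k] LV k Γ :=
  Finsupp.linearCombination k (fun n : ℤ => uu k C (-n)) ∘ₗ
    (AddMonoidAlgebra.coeffLinearEquiv k).toLinearMap

theorem FF_single (n : ℤ) (a : k) : FF k C (AddMonoidAlgebra.single n a) = a • uu k C (-n) :=
  Finsupp.linearCombination_single k a n

theorem FF_apply (f : LaurentPolynomial k) :
    FF k C f = f.coeff.sum fun n a => a • uu k C (-n) :=
  Finsupp.linearCombination_apply k f.coeff

include hrf hC hne in
theorem FF_mul (f g : LaurentPolynomial k) : FF k C (f * g) = FF k C f * FF k C g := by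
  induction f using AddMonoidAlgebra.induction_linear with
  | zero => rw [zero_mul, map_zero, zero_mul]
  | add p q hp hq => rw [add_mul, map_add, hp, hq, map_add, add_mul]
  | single n a =>
    induction g using AddMonoidAlgebra.induction_linear with
    | zero => rw [mul_zero, map_zero, mul_zero]
    | add p q hp hq => rw [mul_add, map_add, hp, hq, map_add, mul_add]
    | single m b =>
      rw [AddMonoidAlgebra.single_mul_single (R := k) (M := ℤ)]
      show FF k C (AddMonoidAlgebra.single (n + m) (a * b)) = _
      rw [FF_single, FF_single, FF_single, smul_mul_smul_comm,
        uu_mul k C hrf hC hne]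
      congr 2
      ring

/-- The non-unital algebra morphism `k[x,x⁻¹] → L(Γ)`, `xⁿ ↦ (C*)ⁿ`. -/
noncomputable def Phi : LaurentPolynomial k →ₙₐ[k] LV k Γ where
  toFun := FF k C
  map_smul' := (FF k C).map_smul
  map_zero' := (FF k C).map_zero
  map_add' := (FF k C).map_add
  map_mul' := FF_mul k C hrf hC hne

theorem Phi_apply (f : LaurentPolynomial k) : Phi k C hrf hC hne f = FF k C f := rfl

include hrf hC hne in
theorem FF_eval (f : LaurentPolynomial k) (j : ℤ) :
    (rrho k C hrf hC hne (FF k C f)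
      (Finsupp.single ((exX C C.src onPath_src, 0) : XX C × ℤ) 1))
      ((exX C C.src onPath_src, -j) : XX C × ℤ) = f.coeff j := by
  rw [FF_apply, map_finsuppSum, Finsupp.sum, LinearMap.sum_apply, Finsupp.finset_sum_apply]
  have hterm : ∀ n ∈ f.coeff.support,
      ((rrho k C hrf hC hne ((f.coeff n) • uu k C (-n)))
        (Finsupp.single ((exX C C.src onPath_src, 0) : XX C × ℤ) 1))
        ((exX C C.src onPath_src, -j) : XX C × ℤ)
      = if n = j then f.coeff n else 0 := by
    intro n _
    rw [map_smul, LinearMap.smul_apply, rho_uu_eval k C hrf hC hne, zero_add,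
      Finsupp.smul_apply, Finsupp.single_apply]
    by_cases h : n = j
    · rw [if_pos h, if_pos (by rw [h]), smul_eq_mul, mul_one]
    · rw [if_neg h, if_neg (by
        intro hcon
        rw [Prod.mk.injEq] at hcon
        exact h (neg_inj.mp hcon.2)), smul_eq_mul, mul_zero]
  rw [Finset.sum_congr rfl hterm, Finset.sum_ite_eq' f.coeff.support j (fun n => f.coeff n)]
  by_cases hj : j ∈ f.coeff.support
  · rw [if_pos hj]
  · rw [if_neg hj, (Finsupp.notMem_support_iff.mp hj)]

include hrf hC hne in
theorem Phi_inj : Function.Injective (Phi k C hrf hC hne) := by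
  intro f g hfg
  rw [Phi_apply, Phi_apply] at hfg
  have h0 : FF k C (f - g) = 0 := by rw [map_sub, hfg, sub_self]
  have : f - g = 0 := by
    ext j
    have := FF_eval k C hrf hC hne (f - g) j
    rw [h0, map_zero, LinearMap.zero_apply, Finsupp.zero_apply] at this
    rw [← this]
    rfl
  exact sub_eq_zero.mp this

include hrf hC hne in
theorem corner_fix {x : LV k Γ} (hx : x ∈ Submodule.span k (Set.range (uu k C))) :
    gv k C.src * x * gv k C.src = x := by
  induction hx using Submodule.span_induction with
  | mem y hy =>
    obtain ⟨n, rfl⟩ := hy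
    rw [v_uu k C hC, uu_v k C hrf hC hne]
  | zero => rw [mul_zero, zero_mul]
  | add a b _ _ ha hb => rw [mul_add, add_mul, ha, hb]
  | smul r a _ ha => rw [mul_smul_comm, smul_mul_assoc, ha]

include hrf hC hne in
theorem FF_mem_span (f : LaurentPolynomial k) :
    FF k C f ∈ Submodule.span k (Set.range (uu k C)) := by
  rw [FF_apply, Finsupp.sum]
  refine Submodule.sum_mem _ fun n _ => ?_
  exact Submodule.smul_mem _ _ (Submodule.subset_span (Set.mem_range_self _))

include hrf hC hne in
theorem Phi_range : Set.range (Phi k C hrf hC hne)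
    = {x : LV k Γ | ∃ a : LV k Γ,
        x = genL k Γ (Gen.vert C.src) * a * genL k Γ (Gen.vert C.src)} := by
  ext x
  constructor
  · rintro ⟨f, rfl⟩
    exact ⟨Phi k C hrf hC hne f,
      (corner_fix k C hrf hC hne (FF_mem_span k C hrf hC hne f)).symm⟩
  · rintro ⟨a, rfl⟩
    have hmem : gv k C.src * a * gv k C.src ∈ Submodule.span k (Set.range (uu k C)) :=
      corner_mem k C hrf hC hne a
    have hsub : Submodule.span k (Set.range (uu k C)) ≤ LinearMap.range (FF k C) := by
      rw [Submodule.span_le]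
      rintro y ⟨n, rfl⟩
      exact ⟨AddMonoidAlgebra.single (-n) 1, by rw [FF_single, one_smul, neg_neg]⟩
    obtain ⟨f, hf⟩ := hsub hmem
    exact ⟨f, hf⟩

end Final

end CornerAux

open DGraph in
/-- if `C` is a cycle with no exit and `v = s(C)`, the corner algebra
`v L_k(Γ) v` is isomorphic to the Laurent polynomial algebra `k[x,x⁻¹]` with
`x ↦ C*`. -/
theorem corner_iso_laurent (k : Type) [CommRing k] (Γ : DGraph)
    (hrf : Γ.RowFinite) (C : Path Γ) (hC : C.IsCycle) (hne : NoExit C) :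
    ∃ φ : LaurentPolynomial k →ₙₐ[k] LV k Γ,
      Function.Injective φ ∧
      φ (LaurentPolynomial.T 1) = pStar (genL k Γ) C ∧
      Set.range φ = {x : LV k Γ | ∃ a : LV k Γ,
        x = genL k Γ (Gen.vert C.src) * a * genL k Γ (Gen.vert C.src)} := by
  refine ⟨CornerAux.Phi k C hrf hC hne, CornerAux.Phi_inj k C hrf hC hne, ?_,
    CornerAux.Phi_range k C hrf hC hne⟩
  rw [CornerAux.Phi_apply,
    show LaurentPolynomial.T (1:ℤ) = AddMonoidAlgebra.single (1:ℤ) (1:k) from rfl,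
    CornerAux.FF_single, one_smul, CornerAux.QQ_eq k C]
  exact CornerAux.uu_negone k C
end

section
/- If w is a sink in a row-finite digraph Γ, then { p* : p a path in Γ with t(p) = w } is a k-basis of the right L_k(Γ)-module w L_k(Γ); moreover w L_k(Γ) is a simple L_k(Γ)-module if and only if k is a field. -/
namespace LPAProof
open DGraph MulOpposite

attribute [local instance] Classical.propDecidable

variable {Γ : DGraph}

theorem walkTrg_cons (v : Γ.V) (e : Γ.E) (l : List Γ.E) :
    Γ.walkTrg v (e :: l) = Γ.walkTrg (Γ.t e) l := rfl

def tailPath (p : Path Γ) {e : Γ.E} {l : List Γ.E} (h : p.edges = e :: l) : Path Γ :=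
  ⟨Γ.t e, l, by have hv := p.valid; rw [h] at hv; exact hv.2⟩

theorem tailPath_trg (p : Path Γ) {e : Γ.E} {l : List Γ.E} (h : p.edges = e :: l) :
    (tailPath p h).trg = p.trg := by
  unfold Path.trg tailPath
  rw [h]; rfl

def consPath (e : Γ.E) (p : Path Γ) (h : Γ.t e = p.src) : Path Γ :=
  ⟨Γ.s e, e :: p.edges, ⟨rfl, by rw [h]; exact p.valid⟩⟩

theorem consPath_trg (e : Γ.E) (p : Path Γ) (h : Γ.t e = p.src) :
    (consPath e p h).trg = p.trg := by
  unfold Path.trg consPath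
  simp only [walkTrg_cons, h]

theorem path_ext (p q : Path Γ) (h1 : p.src = q.src) (h2 : p.edges = q.edges) : p = q := by
  cases p; cases q; simp_all


section Fixed
variable (k : Type) [CommRing k] (Γ : DGraph) (w : Γ.V)

/-- Paths ending at `w`. -/
abbrev PP := {p : Path Γ // p.trg = w}

/-- Free `k`-module on paths ending at `w`. -/
abbrev MM := PP Γ w →₀ k

variable {Γ w}

/-- action of a generator on a basis path -/
noncomputable def gact : Gen Γ → PP Γ w → MM k Γ w
  | Gen.vert v, p => if p.1.src = v then Finsupp.single p 1 else 0
  | Gen.edge e, p =>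
      if h : ∃ l, p.1.edges = e :: l then
        Finsupp.single ⟨tailPath p.1 h.choose_spec, by rw [tailPath_trg]; exact p.2⟩ 1
      else 0
  | Gen.ghost e, p =>
      if h : Γ.t e = p.1.src then
        Finsupp.single ⟨consPath e p.1 h, by rw [consPath_trg]; exact p.2⟩ 1
      else 0

noncomputable def act (g : Gen Γ) : Module.End k (MM k Γ w) :=
  Finsupp.lift (MM k Γ w) k (PP Γ w) (gact k g)

theorem act_single (g : Gen Γ) (p : PP Γ w) (c : k) :
    act k g (Finsupp.single p c) = c • gact k g p := by
  simp [act]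


theorem gact_vert (v : Γ.V) (p : PP Γ w) :
    gact k (Gen.vert v) p = if p.1.src = v then Finsupp.single p 1 else 0 := rfl

theorem gact_edge_of_cons (e : Γ.E) (p : PP Γ w) {l : List Γ.E} (h : p.1.edges = e :: l) :
    gact k (Gen.edge e) p =
      Finsupp.single ⟨tailPath p.1 h, by rw [tailPath_trg]; exact p.2⟩ 1 := by
  have hex : ∃ l', p.1.edges = e :: l' := ⟨l, h⟩
  simp only [gact, dif_pos hex]
  congr 1
  apply Subtype.ext
  apply path_ext
  · rfl
  · show hex.choose = l
    have h3 := h.symm.trans hex.choose_spec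
    injection h3 with _ h5
    exact h5.symm

theorem gact_edge_of_ne (e : Γ.E) (p : PP Γ w) (h : ∀ l, p.1.edges ≠ e :: l) :
    gact k (Gen.edge e) p = 0 := by
  have hex : ¬ ∃ l', p.1.edges = e :: l' := by rintro ⟨l', hl⟩; exact h l' hl
  simp only [gact, dif_neg hex]

theorem gact_ghost_pos (e : Γ.E) (p : PP Γ w) (h : Γ.t e = p.1.src) :
    gact k (Gen.ghost e) p =
      Finsupp.single ⟨consPath e p.1 h, by rw [consPath_trg]; exact p.2⟩ 1 := by
  simp only [gact, dif_pos h]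

theorem gact_ghost_neg (e : Γ.E) (p : PP Γ w) (h : Γ.t e ≠ p.1.src) :
    gact k (Gen.ghost e) p = 0 := by
  simp only [gact, dif_neg h]

/-- first edge of a path has source the source of the path -/
theorem src_of_cons (p : Path Γ) {e : Γ.E} {l : List Γ.E} (h : p.edges = e :: l) :
    Γ.s e = p.src := by
  have hv := p.valid
  rw [h] at hv
  exact hv.1

theorem cons_src (e : Γ.E) (p : Path Γ) (h : Γ.t e = p.src) :
    (consPath e p h).src = Γ.s e := rfl

theorem tail_src (p : Path Γ) {e : Γ.E} {l : List Γ.E} (h : p.edges = e :: l) :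
    (tailPath p h).src = Γ.t e := rfl


theorem end_ext {f g : Module.End k (MM k Γ w)}
    (h : ∀ p, f (Finsupp.single p 1) = g (Finsupp.single p 1)) : f = g := by
  apply Finsupp.lhom_ext
  intro a b
  have hb : (Finsupp.single a b : MM k Γ w) = b • Finsupp.single a 1 := by simp
  rw [hb, map_smul, map_smul, h]

theorem act_single_one (g : Gen Γ) (p : PP Γ w) :
    act k g (Finsupp.single p 1) = gact k g p := by rw [act_single, one_smul]

theorem rel_vert_idem (v : Γ.V) :
    act k (Gen.vert v) * act k (Gen.vert v) = (act k (Gen.vert v) : Module.End k (MM k Γ w)) := by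
  apply end_ext
  intro p
  rw [Module.End.mul_apply, act_single_one, gact_vert]
  by_cases h : p.1.src = v
  · simp [h, act_single_one, gact_vert]
  · simp [h]

theorem rel_vert_orth (v u : Γ.V) (hvu : v ≠ u) :
    act k (Gen.vert u) * act k (Gen.vert v) = (0 : Module.End k (MM k Γ w)) := by
  apply end_ext
  intro p
  rw [Module.End.mul_apply, act_single_one, gact_vert]
  by_cases h : p.1.src = v
  · have hu : ¬ p.1.src = u := by rw [h]; exact hvu
    rw [if_pos h, act_single_one, gact_vert, if_neg hu, LinearMap.zero_apply]
  · simp [h]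

theorem rel_edge_src (e : Γ.E) :
    act k (Gen.edge e) * act k (Gen.vert (Γ.s e)) = (act k (Gen.edge e) : Module.End k (MM k Γ w)) := by
  apply end_ext
  intro p
  rw [Module.End.mul_apply, act_single_one, gact_vert]
  by_cases h : p.1.src = Γ.s e
  · simp [h, act_single_one]
  · rw [if_neg h, map_zero, act_single_one]
    rcases hl : p.1.edges with _ | ⟨e0, l⟩
    · exact (gact_edge_of_ne k e p (fun l' hl' => by rw [hl] at hl'; cases hl')).symm
    · by_cases he : e0 = e
      · exact absurd (he ▸ src_of_cons p.1 hl).symm h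
      · exact (gact_edge_of_ne k e p (fun l' hl' => he (by rw [hl] at hl'; injection hl'))).symm

theorem rel_edge_trg (e : Γ.E) :
    act k (Gen.vert (Γ.t e)) * act k (Gen.edge e) = (act k (Gen.edge e) : Module.End k (MM k Γ w)) := by
  apply end_ext
  intro p
  rw [Module.End.mul_apply, act_single_one]
  rcases hl : p.1.edges with _ | ⟨e0, l⟩
  · rw [gact_edge_of_ne k e p (fun l' hl' => by rw [hl] at hl'; cases hl'), map_zero]
  · by_cases he : e0 = e
    · subst he
      rw [gact_edge_of_cons k e0 p hl, act_single_one, gact_vert,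
        if_pos (tail_src p.1 hl)]
    · rw [gact_edge_of_ne k e p (fun l' hl' => he (by rw [hl] at hl'; injection hl')), map_zero]

theorem rel_ghost_src (e : Γ.E) :
    act k (Gen.ghost e) * act k (Gen.vert (Γ.t e)) = (act k (Gen.ghost e) : Module.End k (MM k Γ w)) := by
  apply end_ext
  intro p
  rw [Module.End.mul_apply, act_single_one, gact_vert]
  by_cases h : p.1.src = Γ.t e
  · simp [h, act_single_one]
  · rw [if_neg h, map_zero, act_single_one, gact_ghost_neg k e p (fun hh => h hh.symm)]

theorem rel_ghost_trg (e : Γ.E) :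
    act k (Gen.vert (Γ.s e)) * act k (Gen.ghost e) = (act k (Gen.ghost e) : Module.End k (MM k Γ w)) := by
  apply end_ext
  intro p
  rw [Module.End.mul_apply, act_single_one]
  by_cases h : Γ.t e = p.1.src
  · rw [gact_ghost_pos k e p h, act_single_one, gact_vert,
      if_pos (cons_src e p.1 h)]
  · rw [gact_ghost_neg k e p h, map_zero]

theorem rel_ck1_same (e : Γ.E) :
    act k (Gen.edge e) * act k (Gen.ghost e) = (act k (Gen.vert (Γ.t e)) : Module.End k (MM k Γ w)) := by
  apply end_ext
  intro p
  rw [Module.End.mul_apply, act_single_one, act_single_one, gact_vert]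
  by_cases h : Γ.t e = p.1.src
  · rw [gact_ghost_pos k e p h, act_single_one,
      gact_edge_of_cons k e _ (rfl : (consPath e p.1 h).edges = e :: p.1.edges),
      if_pos h.symm]
    congr 1
    exact Subtype.ext (path_ext _ _ h rfl)
  · rw [gact_ghost_neg k e p h, map_zero, if_neg (fun hh => h hh.symm)]

theorem rel_ck1_diff (e f : Γ.E) (hef : e ≠ f) :
    act k (Gen.edge f) * act k (Gen.ghost e) = (0 : Module.End k (MM k Γ w)) := by
  apply end_ext
  intro p
  rw [Module.End.mul_apply, act_single_one]
  by_cases h : Γ.t e = p.1.src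
  · rw [gact_ghost_pos k e p h, act_single_one,
      gact_edge_of_ne k f _ (fun l' hl' => hef (by injection hl'))]
    rfl
  · rw [gact_ghost_neg k e p h, map_zero]; rfl

theorem rel_ck2 (hw : Γ.IsSink w) (v : Γ.V) (h : {e : Γ.E | Γ.s e = v}.Finite)
    (hns : ¬ Γ.IsSink v) :
    (act k (Gen.vert v) : Module.End k (MM k Γ w)) =
      ∑ e ∈ h.toFinset, act k (Gen.ghost e) * act k (Gen.edge e) := by
  apply end_ext
  intro p
  rw [act_single_one, gact_vert, LinearMap.sum_apply]
  rcases hl : p.1.edges with _ | ⟨e0, l⟩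
  · -- p is the trivial path at w; p.src = w ≠ v
    have hsrc : p.1.src = w := by
      have := p.2
      unfold Path.trg at this
      rw [hl] at this
      exact this
    have hne : ¬ p.1.src = v := by
      rw [hsrc]; rintro rfl; exact hns hw
    rw [if_neg hne]
    refine (Finset.sum_eq_zero ?_).symm
    intro e _
    rw [Module.End.mul_apply, act_single_one,
      gact_edge_of_ne k e p (fun l' hl' => by rw [hl] at hl'; cases hl'), map_zero]
  · have hsrc0 : Γ.s e0 = p.1.src := src_of_cons p.1 hl
    by_cases hv : p.1.src = v
    · rw [if_pos hv]
      rw [Finset.sum_eq_single e0]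
      · rw [Module.End.mul_apply, act_single_one, gact_edge_of_cons k e0 p hl, act_single_one,
          gact_ghost_pos k e0 _ (tail_src p.1 hl).symm]
        congr 1
        apply Subtype.ext
        apply path_ext
        · exact hsrc0.symm
        · exact hl
      · intro e _ hee0
        rw [Module.End.mul_apply, act_single_one,
          gact_edge_of_ne k e p (fun l' hl' => hee0 (by rw [hl] at hl'; injection hl' with h1 _; exact h1.symm)),
          map_zero]
      · intro habs
        exact absurd (Set.Finite.mem_toFinset h |>.mpr (hv ▸ hsrc0)) habs
    · rw [if_neg hv]
      refine (Finset.sum_eq_zero ?_).symm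
      intro e he
      have hse : Γ.s e = v := (Set.Finite.mem_toFinset h).mp he
      rw [Module.End.mul_apply, act_single_one,
        gact_edge_of_ne k e p (fun l' hl' => hv (by
          have := src_of_cons p.1 hl'
          rw [← this, hse])), map_zero]


/-! ### The representation on `MM` -/

noncomputable def φrep : FreeAlgebra k (Gen Γ) →ₐ[k] (Module.End k (MM k Γ w))ᵐᵒᵖ :=
  FreeAlgebra.lift k (fun g => op (act k g))

theorem φrep_rel (hw : Γ.IsSink w) : ∀ ⦃x y : FreeAlgebra k (Gen Γ)⦄,
    LRel k Γ x y → φrep k (w := w) x = φrep k y := by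
  intro x y hxy
  induction hxy with
  | vert_idem v =>
      simp only [φrep, map_mul, FreeAlgebra.lift_ι_apply, ← op_mul]
      exact congrArg op (rel_vert_idem k v)
  | vert_orth v u hvu =>
      simp only [φrep, map_mul, FreeAlgebra.lift_ι_apply, ← op_mul, map_zero]
      rw [rel_vert_orth k v u hvu, op_zero]
  | edge_src e =>
      simp only [φrep, map_mul, FreeAlgebra.lift_ι_apply, ← op_mul]
      exact congrArg op (rel_edge_src k e)
  | edge_trg e =>
      simp only [φrep, map_mul, FreeAlgebra.lift_ι_apply, ← op_mul]
      exact congrArg op (rel_edge_trg k e)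
  | ghost_src e =>
      simp only [φrep, map_mul, FreeAlgebra.lift_ι_apply, ← op_mul]
      exact congrArg op (rel_ghost_src k e)
  | ghost_trg e =>
      simp only [φrep, map_mul, FreeAlgebra.lift_ι_apply, ← op_mul]
      exact congrArg op (rel_ghost_trg k e)
  | ck1_same e =>
      simp only [φrep, map_mul, FreeAlgebra.lift_ι_apply, ← op_mul]
      exact congrArg op (rel_ck1_same k e)
  | ck1_diff e f hef =>
      simp only [φrep, map_mul, FreeAlgebra.lift_ι_apply, ← op_mul, map_zero]
      rw [rel_ck1_diff k e f hef, op_zero]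
  | ck2 v h hns =>
      simp only [φrep, map_sum, map_mul, FreeAlgebra.lift_ι_apply, ← op_mul]
      rw [show (op (act k (Gen.vert v)) : (Module.End k (MM k Γ w))ᵐᵒᵖ)
            = op (∑ e ∈ h.toFinset, act k (Gen.ghost e) * act k (Gen.edge e)) from
          congrArg op (rel_ck2 k hw v h hns)]
      exact map_sum (opAddEquiv : Module.End k (MM k Γ w) ≃+ _) _ _

variable (w) in
noncomputable def Lrep (hw : Γ.IsSink w) : LV k Γ →ₐ[k] (Module.End k (MM k Γ w))ᵐᵒᵖ :=
  RingQuot.liftAlgHom k ⟨φrep k, φrep_rel k hw⟩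

variable (w) in
/-- the "right action" of `x` on `MM`. -/
noncomputable def Arep (hw : Γ.IsSink w) (x : LV k Γ) : Module.End k (MM k Γ w) :=
  (Lrep k w hw x).unop

variable {hw : Γ.IsSink w}

theorem Arep_gen (hw : Γ.IsSink w) (g : Gen Γ) : Arep k w hw (genL k Γ g) = act k g := by
  unfold Arep Lrep genL
  rw [RingQuot.liftAlgHom_mkAlgHom_apply]
  simp [φrep]

theorem Arep_mul (hw : Γ.IsSink w) (x y : LV k Γ) :
    Arep k w hw (x * y) = Arep k w hw y * Arep k w hw x := by
  unfold Arep; rw [map_mul]; rfl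

theorem Arep_one (hw : Γ.IsSink w) : Arep k w hw 1 = 1 := by
  unfold Arep; rw [map_one]; rfl

theorem Arep_add (hw : Γ.IsSink w) (x y : LV k Γ) :
    Arep k w hw (x + y) = Arep k w hw x + Arep k w hw y := by
  unfold Arep; rw [map_add]; rfl

theorem Arep_smul (hw : Γ.IsSink w) (c : k) (x : LV k Γ) :
    Arep k w hw (c • x) = c • Arep k w hw x := by
  unfold Arep; rw [map_smul]; rfl

theorem Arep_algebraMap (hw : Γ.IsSink w) (c : k) (m : MM k Γ w) :
    Arep k w hw (algebraMap k (LV k Γ) c) m = c • m := by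
  unfold Arep
  rw [AlgHom.commutes]
  show (algebraMap k (Module.End k (MM k Γ w)) c) m = c • m
  simp [Module.algebraMap_end_apply]


/-! ### identities in `LV k Γ` -/

variable (Γ)

theorem gen_mul_gen (a b : Gen Γ) (c : FreeAlgebra k (Gen Γ))
    (h : LRel k Γ (FreeAlgebra.ι k a * FreeAlgebra.ι k b) c) :
    genL k Γ a * genL k Γ b = RingQuot.mkAlgHom k (LRel k Γ) c := by
  unfold genL
  rw [← map_mul]
  exact RingQuot.mkAlgHom_rel k h

theorem vert_mul_vert (v u : Γ.V) :
    genL k Γ (Gen.vert v) * genL k Γ (Gen.vert u)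
      = if v = u then genL k Γ (Gen.vert v) else 0 := by
  by_cases h : v = u
  · subst h
    rw [if_pos rfl]
    exact gen_mul_gen k Γ _ _ _ (LRel.vert_idem v)
  · rw [if_neg h]
    rw [gen_mul_gen k Γ _ _ _ (LRel.vert_orth v u h), map_zero]

theorem vert_mul_edge (v : Γ.V) (e : Γ.E) :
    genL k Γ (Gen.vert v) * genL k Γ (Gen.edge e)
      = if v = Γ.s e then genL k Γ (Gen.edge e) else 0 := by
  by_cases h : v = Γ.s e
  · subst h
    rw [if_pos rfl]
    exact gen_mul_gen k Γ _ _ _ (LRel.edge_src e)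
  · rw [if_neg h]
    have h1 : genL k Γ (Gen.edge e) = genL k Γ (Gen.vert (Γ.s e)) * genL k Γ (Gen.edge e) :=
      (gen_mul_gen k Γ _ _ _ (LRel.edge_src e)).symm
    rw [h1, ← mul_assoc, vert_mul_vert, if_neg h, zero_mul]

theorem edge_mul_vert (e : Γ.E) (v : Γ.V) :
    genL k Γ (Gen.edge e) * genL k Γ (Gen.vert v)
      = if v = Γ.t e then genL k Γ (Gen.edge e) else 0 := by
  by_cases h : v = Γ.t e
  · subst h
    rw [if_pos rfl]
    exact gen_mul_gen k Γ _ _ _ (LRel.edge_trg e)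
  · rw [if_neg h]
    have h1 : genL k Γ (Gen.edge e) = genL k Γ (Gen.edge e) * genL k Γ (Gen.vert (Γ.t e)) :=
      (gen_mul_gen k Γ _ _ _ (LRel.edge_trg e)).symm
    rw [h1, mul_assoc, vert_mul_vert, if_neg (fun hh => h hh.symm), mul_zero]

theorem vert_mul_ghost (v : Γ.V) (e : Γ.E) :
    genL k Γ (Gen.vert v) * genL k Γ (Gen.ghost e)
      = if v = Γ.t e then genL k Γ (Gen.ghost e) else 0 := by
  by_cases h : v = Γ.t e
  · subst h
    rw [if_pos rfl]
    exact gen_mul_gen k Γ _ _ _ (LRel.ghost_src e)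
  · rw [if_neg h]
    have h1 : genL k Γ (Gen.ghost e) = genL k Γ (Gen.vert (Γ.t e)) * genL k Γ (Gen.ghost e) :=
      (gen_mul_gen k Γ _ _ _ (LRel.ghost_src e)).symm
    rw [h1, ← mul_assoc, vert_mul_vert, if_neg h, zero_mul]

theorem ghost_mul_vert (e : Γ.E) (v : Γ.V) :
    genL k Γ (Gen.ghost e) * genL k Γ (Gen.vert v)
      = if v = Γ.s e then genL k Γ (Gen.ghost e) else 0 := by
  by_cases h : v = Γ.s e
  · subst h
    rw [if_pos rfl]
    exact gen_mul_gen k Γ _ _ _ (LRel.ghost_trg e)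
  · rw [if_neg h]
    have h1 : genL k Γ (Gen.ghost e) = genL k Γ (Gen.ghost e) * genL k Γ (Gen.vert (Γ.s e)) :=
      (gen_mul_gen k Γ _ _ _ (LRel.ghost_trg e)).symm
    rw [h1, mul_assoc, vert_mul_vert, if_neg (fun hh => h hh.symm), mul_zero]

theorem ghost_mul_edge (e f : Γ.E) :
    genL k Γ (Gen.ghost e) * genL k Γ (Gen.edge f)
      = if e = f then genL k Γ (Gen.vert (Γ.t e)) else 0 := by
  by_cases h : e = f
  · subst h
    rw [if_pos rfl]
    exact gen_mul_gen k Γ _ _ _ (LRel.ck1_same e)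
  · rw [if_neg h]
    rw [gen_mul_gen k Γ _ _ _ (LRel.ck1_diff e f h), map_zero]

variable {Γ}

theorem wordStar_nil (v : Γ.V) :
    wordStar Γ (genL k Γ) v [] = genL k Γ (Gen.vert v) := by
  unfold wordStar
  simp

theorem wordStar_cons (v : Γ.V) (e : Γ.E) (l : List Γ.E) :
    wordStar Γ (genL k Γ) v (e :: l)
      = wordStar Γ (genL k Γ) (Γ.t e) l * (genL k Γ (Gen.ghost e) * genL k Γ (Gen.vert v)) := by
  unfold wordStar
  rw [List.reverse_cons, List.map_append, List.prod_append]
  simp only [List.map_cons, List.map_nil, List.prod_cons, List.prod_nil, mul_one]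
  rw [mul_assoc, mul_assoc, ← mul_assoc (genL k Γ (Gen.vert (Γ.t e))), vert_mul_ghost,
    if_pos rfl]


theorem wordStar_mul_vert (v : Γ.V) (l : List Γ.E) (u : Γ.V) :
    wordStar Γ (genL k Γ) v l * genL k Γ (Gen.vert u)
      = if v = u then wordStar Γ (genL k Γ) v l else 0 := by
  unfold wordStar
  rw [mul_assoc, vert_mul_vert]
  split <;> simp

theorem wordStar_mul_ghost (v : Γ.V) (l : List Γ.E) (e : Γ.E) :
    wordStar Γ (genL k Γ) v l * genL k Γ (Gen.ghost e)
      = if Γ.t e = v then wordStar Γ (genL k Γ) (Γ.s e) (e :: l) else 0 := by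
  by_cases h : Γ.t e = v
  · rw [if_pos h]
    subst h
    rw [wordStar_cons, ghost_mul_vert, if_pos rfl]
  · rw [if_neg h]
    unfold wordStar
    rw [mul_assoc, vert_mul_ghost, if_neg (fun hh => h hh.symm), mul_zero]

theorem wordStar_nil_mul_edge (v : Γ.V) (e : Γ.E) (hne : v ≠ Γ.s e) :
    wordStar Γ (genL k Γ) v [] * genL k Γ (Gen.edge e) = 0 := by
  rw [wordStar_nil, vert_mul_edge, if_neg hne]

theorem wordStar_cons_mul_edge (v : Γ.V) (e1 : Γ.E) (l : List Γ.E) (e : Γ.E) :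
    wordStar Γ (genL k Γ) v (e1 :: l) * genL k Γ (Gen.edge e)
      = if v = Γ.s e ∧ e1 = e then wordStar Γ (genL k Γ) (Γ.t e1) l else 0 := by
  rw [wordStar_cons, mul_assoc, mul_assoc, vert_mul_edge]
  by_cases hv : v = Γ.s e
  · rw [if_pos hv, ghost_mul_edge]
    by_cases he : e1 = e
    · rw [if_pos he, if_pos ⟨hv, he⟩, wordStar_mul_vert, if_pos rfl]
    · rw [if_neg he, if_neg (fun hh => he hh.2), mul_zero]
  · rw [if_neg hv, if_neg (fun hh => hv hh.1), mul_zero, mul_zero]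

theorem pStar_def (p : Path Γ) :
    pStar (genL k Γ) p = wordStar Γ (genL k Γ) p.src p.edges := rfl

theorem pStar_mul_vert (p : Path Γ) (u : Γ.V) :
    pStar (genL k Γ) p * genL k Γ (Gen.vert u)
      = if p.src = u then pStar (genL k Γ) p else 0 := by
  rw [pStar_def, wordStar_mul_vert]

theorem pStar_mul_ghost (p : Path Γ) (e : Γ.E) (h : Γ.t e = p.src) :
    pStar (genL k Γ) p * genL k Γ (Gen.ghost e)
      = pStar (genL k Γ) (consPath e p h) := by
  rw [pStar_def, wordStar_mul_ghost, if_pos h]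
  rfl

theorem pStar_mul_ghost_ne (p : Path Γ) (e : Γ.E) (h : Γ.t e ≠ p.src) :
    pStar (genL k Γ) p * genL k Γ (Gen.ghost e) = 0 := by
  rw [pStar_def, wordStar_mul_ghost, if_neg h]

theorem pStar_mul_edge {w : Γ.V} (hw : Γ.IsSink w) (p : Path Γ) (htrg : p.trg = w)
    {e : Γ.E} {l : List Γ.E} (h : p.edges = e :: l) :
    pStar (genL k Γ) p * genL k Γ (Gen.edge e) = pStar (genL k Γ) (tailPath p h) := by
  rw [pStar_def, h, wordStar_cons_mul_edge, if_pos ⟨(src_of_cons p h).symm, rfl⟩]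
  rfl

theorem pStar_mul_edge_ne {w : Γ.V} (hw : Γ.IsSink w) (p : Path Γ) (htrg : p.trg = w)
    (e : Γ.E) (h : ∀ l, p.edges ≠ e :: l) :
    pStar (genL k Γ) p * genL k Γ (Gen.edge e) = 0 := by
  rcases hl : p.edges with _ | ⟨e1, l⟩
  · rw [pStar_def, hl]
    apply wordStar_nil_mul_edge
    intro hv
    apply hw e
    rw [← hv]
    have h2 : p.trg = p.src := by unfold Path.trg; rw [hl]; rfl
    rw [← htrg, h2]
  · rw [pStar_def, hl, wordStar_cons_mul_edge]
    rw [if_neg]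
    rintro ⟨-, rfl⟩
    exact h l hl

theorem vert_trg_mul_wordStar (v : Γ.V) (l : List Γ.E) :
    genL k Γ (Gen.vert (Γ.walkTrg v l)) * wordStar Γ (genL k Γ) v l
      = wordStar Γ (genL k Γ) v l := by
  induction l generalizing v with
  | nil =>
      rw [wordStar_nil, vert_mul_vert, if_pos (show Γ.walkTrg v [] = v from rfl)]
      rfl
  | cons e l ih =>
      rw [wordStar_cons, walkTrg_cons, ← mul_assoc, ih]

theorem vert_trg_mul_pStar (p : Path Γ) :
    genL k Γ (Gen.vert p.trg) * pStar (genL k Γ) p = pStar (genL k Γ) p :=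
  vert_trg_mul_wordStar k p.src p.edges


variable (Γ) (w)

/-- the trivial path at `w`, as an element of `PP`. -/
def wpp : PP Γ w := ⟨⟨w, [], trivial⟩, rfl⟩

variable {Γ w}

theorem Arep_wordStar (hw : Γ.IsSink w) (l : List Γ.E) (v : Γ.V)
    (hval : Γ.IsWalkFrom v l) (htrg : Γ.walkTrg v l = w) :
    Arep k w hw (wordStar Γ (genL k Γ) v l) (Finsupp.single (wpp Γ w) 1)
      = Finsupp.single (⟨⟨v, l, hval⟩, htrg⟩ : PP Γ w) 1 := by
  induction l generalizing v with
  | nil =>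
      have hv : v = w := htrg
      rw [wordStar_nil, Arep_gen, act_single_one, gact_vert,
        if_pos (show (wpp Γ w).1.src = v from hv.symm)]
      congr 1
      exact Subtype.ext (path_ext _ _ hv.symm rfl)
  | cons e l ih =>
      have hval' : Γ.s e = v ∧ Γ.IsWalkFrom (Γ.t e) l := hval
      rw [wordStar_cons, Arep_mul, Module.End.mul_apply,
        ih (Γ.t e) hval'.2 htrg, Arep_mul, Module.End.mul_apply, Arep_gen, Arep_gen,
        act_single_one, gact_ghost_pos k e _ (rfl : Γ.t e = _), act_single_one, gact_vert]
      split_ifs with hcond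
      · congr 1
        exact Subtype.ext (path_ext _ _ hval'.1 rfl)
      · exact absurd hval'.1 hcond

theorem Arep_pStar (hw : Γ.IsSink w) (p : PP Γ w) :
    Arep k w hw (pStar (genL k Γ) p.1) (Finsupp.single (wpp Γ w) 1)
      = Finsupp.single p 1 := by
  rw [pStar_def, Arep_wordStar k hw p.1.edges p.1.src p.1.valid p.2]


variable (Γ w) in
noncomputable def SS : Submodule k (LV k Γ) :=
  Submodule.span k (Set.range fun p : PP Γ w => pStar (genL k Γ) p.1)

variable (w) in
noncomputable def Φmap (hw : Γ.IsSink w) : LV k Γ →ₗ[k] MM k Γ w where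
  toFun x := Arep k w hw x (Finsupp.single (wpp Γ w) 1)
  map_add' x y := by
    show Arep k w hw (x + y) _ = _
    rw [Arep_add]; rfl
  map_smul' c x := by
    show Arep k w hw (c • x) _ = Module.toModuleEnd k k c • _
    rw [Arep_smul]; rfl

theorem Φmap_pStar (hw : Γ.IsSink w) (p : PP Γ w) :
    Φmap k w hw (pStar (genL k Γ) p.1) = Finsupp.single p 1 := Arep_pStar k hw p

theorem li (hw : Γ.IsSink w) :
    LinearIndependent k (fun p : PP Γ w => pStar (genL k Γ) p.1) := by
  apply LinearIndependent.of_comp (Φmap k w hw)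
  have h : (⇑(Φmap k w hw) ∘ fun p : PP Γ w => pStar (genL k Γ) p.1)
      = fun p : PP Γ w => Finsupp.single p (1 : k) :=
    funext fun p => Φmap_pStar k hw p
  rw [h, ← Finsupp.coe_basisSingleOne]
  exact Module.Basis.linearIndependent _

theorem pStar_mem_SS (p : PP Γ w) : pStar (genL k Γ) p.1 ∈ SS k Γ w :=
  Submodule.subset_span ⟨p, rfl⟩

theorem SS_mul_gen (g : Gen Γ) (hw : Γ.IsSink w) :
    ∀ x ∈ SS k Γ w, x * genL k Γ g ∈ SS k Γ w := by
  intro x hx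
  induction hx using Submodule.span_induction with
  | mem x hxs =>
      obtain ⟨p, rfl⟩ := hxs
      match g with
      | Gen.vert u =>
          rw [pStar_mul_vert]
          split
          · exact pStar_mem_SS k p
          · exact (SS k Γ w).zero_mem
      | Gen.edge e =>
          by_cases h : ∃ l, p.1.edges = e :: l
          · obtain ⟨l, hl⟩ := h
            rw [pStar_mul_edge k hw p.1 p.2 hl]
            exact pStar_mem_SS k ⟨tailPath p.1 hl, by rw [tailPath_trg]; exact p.2⟩
          · rw [pStar_mul_edge_ne k hw p.1 p.2 e (fun l hl => h ⟨l, hl⟩)]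
            exact (SS k Γ w).zero_mem
      | Gen.ghost e =>
          by_cases h : Γ.t e = p.1.src
          · rw [pStar_mul_ghost k p.1 e h]
            exact pStar_mem_SS k ⟨consPath e p.1 h, by rw [consPath_trg]; exact p.2⟩
          · rw [pStar_mul_ghost_ne k p.1 e h]
            exact (SS k Γ w).zero_mem
  | zero => rw [zero_mul]; exact (SS k Γ w).zero_mem
  | add x y hx hy ihx ihy => rw [add_mul]; exact (SS k Γ w).add_mem ihx ihy
  | smul c x hx ihx => rw [smul_mul_assoc]; exact (SS k Γ w).smul_mem c ihx

theorem SS_mul_closed (hw : Γ.IsSink w) (a : LV k Γ) :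
    ∀ x ∈ SS k Γ w, x * a ∈ SS k Γ w := by
  obtain ⟨y, rfl⟩ := RingQuot.mkAlgHom_surjective k (LRel k Γ) a
  induction y using FreeAlgebra.induction with
  | grade0 r =>
      intro x hx
      rw [AlgHom.commutes, ← Algebra.commutes, ← Algebra.smul_def]
      exact (SS k Γ w).smul_mem r hx
  | grade1 g => exact SS_mul_gen k g hw
  | mul a b iha ihb =>
      intro x hx
      rw [map_mul, ← mul_assoc]
      exact ihb _ (iha x hx)
  | add a b iha ihb =>
      intro x hx
      rw [map_add, mul_add]
      exact (SS k Γ w).add_mem (iha x hx) (ihb x hx)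

theorem SS_eq_rIdeal (hw : Γ.IsSink w) :
    (SS k Γ w : Set (LV k Γ)) = (rIdeal (LV k Γ) (genL k Γ (Gen.vert w)) : Set (LV k Γ)) := by
  apply Set.Subset.antisymm
  · intro x hx
    induction hx using Submodule.span_induction with
    | mem x hxs =>
        obtain ⟨p, rfl⟩ := hxs
        show pStar (genL k Γ) p.1 ∈ (rIdeal (LV k Γ) (genL k Γ (Gen.vert w)) : Set (LV k Γ))
        have h2 := vert_trg_mul_pStar k p.1
        rw [p.2] at h2
        have h1 : pStar (genL k Γ) p.1
            = MulOpposite.op (pStar (genL k Γ) p.1) • genL k Γ (Gen.vert w) := h2.symm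
        rw [h1]
        exact Submodule.smul_mem _ _ (Submodule.mem_span_singleton_self _)
    | zero => exact (rIdeal (LV k Γ) _).zero_mem
    | add x y hx hy ihx ihy => exact (rIdeal (LV k Γ) _).add_mem ihx ihy
    | smul c x hx ihx =>
        have h1 : c • x = MulOpposite.op (algebraMap k (LV k Γ) c) • x := by
          show c • x = x * algebraMap k (LV k Γ) c
          rw [← Algebra.commutes, ← Algebra.smul_def]
        rw [h1]
        exact Submodule.smul_mem _ _ ihx
  · intro x hx
    induction hx using Submodule.span_induction with
    | mem x hxs =>
        rw [Set.mem_singleton_iff.mp hxs]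
        have h1 : genL k Γ (Gen.vert w) = pStar (genL k Γ) (wpp Γ w).1 := by
          rw [pStar_def]
          exact (wordStar_nil k w).symm
        rw [h1]
        exact pStar_mem_SS k (wpp Γ w)
    | zero => exact (SS k Γ w).zero_mem
    | add x y hx hy ihx ihy => exact (SS k Γ w).add_mem ihx ihy
    | smul a x hx ihx =>
        have h1 : a • x = x * a.unop := rfl
        rw [h1]
        exact SS_mul_closed k hw a.unop x ihx


/-! ### pElem computations -/

theorem wordElem_cons (v : Γ.V) (e : Γ.E) (l : List Γ.E) :
    wordElem Γ (genL k Γ) v (e :: l)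
      = (genL k Γ (Gen.vert v) * genL k Γ (Gen.edge e)) * wordElem Γ (genL k Γ) (Γ.t e) l := by
  unfold wordElem
  rw [List.map_cons, List.prod_cons, mul_assoc (genL k Γ (Gen.vert v))]
  congr 1
  rw [← mul_assoc, edge_mul_vert, if_pos rfl]

theorem src_eq_w_eq_wpp (hw : Γ.IsSink w) (q : PP Γ w) (h : q.1.src = w) : q = wpp Γ w := by
  rcases hl : q.1.edges with _ | ⟨e, l⟩
  · exact Subtype.ext (path_ext _ _ h hl)
  · exact absurd (h ▸ src_of_cons q.1 hl) (hw e)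

theorem Arep_wordElem (hw : Γ.IsSink w) (l : List Γ.E) (v : Γ.V)
    (hval : Γ.IsWalkFrom v l) (htrg : Γ.walkTrg v l = w) (q : PP Γ w) :
    Arep k w hw (wordElem Γ (genL k Γ) v l) (Finsupp.single q 1)
      = if q = (⟨⟨v, l, hval⟩, htrg⟩ : PP Γ w) then Finsupp.single (wpp Γ w) 1 else 0 := by
  induction l generalizing v q with
  | nil =>
      have hv : v = w := htrg
      subst hv
      have h0 : wordElem Γ (genL k Γ) v [] = genL k Γ (Gen.vert v) := by
        unfold wordElem; simp
      rw [h0, Arep_gen, act_single_one, gact_vert]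
      by_cases h : q.1.src = v
      · have hq : q = wpp Γ v := src_eq_w_eq_wpp hw q h
        rw [if_pos h, hq, if_pos]
        exact Subtype.ext (path_ext _ _ rfl rfl)
      · rw [if_neg h, if_neg]
        intro hq
        exact h (by rw [hq])
  | cons e l ih =>
      have hval' : Γ.s e = v ∧ Γ.IsWalkFrom (Γ.t e) l := hval
      rw [wordElem_cons, Arep_mul, Module.End.mul_apply, Arep_mul, Module.End.mul_apply,
        Arep_gen, Arep_gen, act_single_one, gact_vert]
      by_cases hsrc : q.1.src = v
      · rw [if_pos hsrc]
        rcases hl : q.1.edges with _ | ⟨e1, l1⟩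
        · -- q is trivial path; but then q.src = w = v, and s e = v contradicts sink
          have hqw : q.1.src = w := by
            have h2 : q.1.trg = q.1.src := by unfold Path.trg; rw [hl]; rfl
            rw [← h2]; exact q.2
          exact absurd (hval'.1.trans (hsrc.symm.trans hqw)) (hw e)
        · by_cases he : e1 = e
          · subst he
            rw [act_single_one, gact_edge_of_cons k e1 q hl, ih (Γ.t e1) hval'.2 htrg]
            by_cases hq : q = ⟨⟨v, e1 :: l, hval⟩, htrg⟩
            · rw [if_pos hq, if_pos]
              apply Subtype.ext
              apply path_ext
              · rfl
              · show l1 = l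
                have := hq ▸ hl
                change (e1 :: l : List Γ.E) = e1 :: l1 at this
                injection this with _ h5
                exact h5.symm
            · rw [if_neg hq, if_neg]
              intro hc
              apply hq
              apply Subtype.ext
              apply path_ext
              · exact hsrc
              · have h6 : (tailPath q.1 hl).edges = l := congrArg (fun r => (r.1 : Path Γ).edges) hc
                show q.1.edges = e1 :: l
                rw [hl, ← h6]
                rfl
          · rw [act_single_one,
              gact_edge_of_ne k e q (fun l' hl' => he (by
                rw [hl] at hl'
                exact ((List.cons.injEq _ _ _ _).mp hl').1)),
              map_zero, if_neg]
            intro hq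
            apply he
            have := hq ▸ hl
            change (e :: l : List Γ.E) = e1 :: l1 at this
            injection this with h8 _
            exact h8.symm
      · rw [if_neg hsrc, map_zero, map_zero, if_neg]
        intro hq
        exact hsrc (by rw [hq])

theorem Arep_pElem (hw : Γ.IsSink w) (p q : PP Γ w) :
    Arep k w hw (pElem (genL k Γ) p.1) (Finsupp.single q 1)
      = if q = p then Finsupp.single (wpp Γ w) 1 else 0 := by
  have h := Arep_wordElem k hw p.1.edges p.1.src p.1.valid p.2 q
  rw [show (⟨⟨p.1.src, p.1.edges, p.1.valid⟩, p.2⟩ : PP Γ w) = p from Subtype.ext rfl] at h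
  exact h

theorem Arep_pElem_full (hw : Γ.IsSink w) (p : PP Γ w) (m : MM k Γ w) :
    Arep k w hw (pElem (genL k Γ) p.1) m = Finsupp.single (wpp Γ w) (m p) := by
  classical
  have hm : m = m.sum fun q c => c • Finsupp.single q 1 := by
    simp only [Finsupp.smul_single, smul_eq_mul, mul_one, Finsupp.sum_single]
  conv_lhs => rw [hm]
  rw [map_finsuppSum]
  have h1 : ∀ (q : PP Γ w) (c : k),
      Arep k w hw (pElem (genL k Γ) p.1) (c • Finsupp.single q 1)
        = if q = p then Finsupp.single (wpp Γ w) c else 0 := by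
    intro q c
    rw [map_smul, Arep_pElem k hw p q]
    split
    · rw [Finsupp.smul_single, smul_eq_mul, mul_one]
    · rw [smul_zero]
  simp only [h1]
  rw [Finsupp.sum_ite_eq' m p (fun _ c => Finsupp.single (wpp Γ w) c)]
  split
  · rfl
  · rw [Finsupp.notMem_support_iff.mp ‹_›, Finsupp.single_zero]


/-! ### coordinates and ideals -/

theorem act_coords (g : Gen Γ) (I : Ideal k) (m : MM k Γ w) (hm : ∀ q, m q ∈ I) (q : PP Γ w) :
    (act k g m) q ∈ I := by
  classical
  have h0 : act k g m = m.sum fun p c => c • gact k g p := Finsupp.lift_apply _ _ _ _ _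
  rw [h0, Finsupp.sum_apply]
  apply Submodule.sum_mem
  intro p _
  have h1 : (gact k g p) q = 0 ∨ (gact k g p) q = 1 := by
    match g with
    | Gen.vert v =>
        rw [gact_vert]
        split
        · rw [Finsupp.single_apply]; split <;> simp
        · simp
    | Gen.edge e =>
        rcases hl : p.1.edges with _ | ⟨e1, l⟩
        · rw [gact_edge_of_ne k e p (fun l' hl' => by rw [hl] at hl'; cases hl')]; simp
        · by_cases he : e1 = e
          · subst he
            rw [gact_edge_of_cons k e1 p hl, Finsupp.single_apply]
            split <;> simp
          · rw [gact_edge_of_ne k e p (fun l' hl' => he (by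
              rw [hl] at hl'; exact ((List.cons.injEq _ _ _ _).mp hl').1))]
            simp
    | Gen.ghost e =>
        by_cases h : Γ.t e = p.1.src
        · rw [gact_ghost_pos k e p h, Finsupp.single_apply]; split <;> simp
        · rw [gact_ghost_neg k e p h]; simp
  show (m p • gact k g p) q ∈ I
  rw [Finsupp.smul_apply, smul_eq_mul]
  rcases h1 with h1 | h1 <;> rw [h1]
  · rw [mul_zero]; exact I.zero_mem
  · rw [mul_one]; exact hm p

theorem Arep_coords (hw : Γ.IsSink w) (x : LV k Γ) (I : Ideal k) (m : MM k Γ w)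
    (hm : ∀ q, m q ∈ I) (q : PP Γ w) : (Arep k w hw x m) q ∈ I := by
  obtain ⟨y, rfl⟩ := RingQuot.mkAlgHom_surjective k (LRel k Γ) x
  induction y using FreeAlgebra.induction generalizing m q with
  | grade0 r =>
      have h1 : (RingQuot.mkAlgHom k (LRel k Γ)) (algebraMap k (FreeAlgebra k (Gen Γ)) r)
          = algebraMap k (LV k Γ) r := AlgHom.commutes _ _
      rw [h1]
      have h2 : Arep k w hw (algebraMap k (LV k Γ) r) m = r • m := by
        apply Arep_algebraMap
      rw [h2, Finsupp.smul_apply, smul_eq_mul]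
      exact I.mul_mem_left r (hm q)
  | grade1 g =>
      have h1 : (RingQuot.mkAlgHom k (LRel k Γ)) (FreeAlgebra.ι k g) = genL k Γ g := rfl
      rw [h1, Arep_gen]
      exact act_coords k g I m hm q
  | mul a b iha ihb =>
      rw [map_mul, Arep_mul, Module.End.mul_apply]
      exact ihb _ (fun q' => iha m hm q') q
  | add a b iha ihb =>
      rw [map_add, Arep_add, LinearMap.add_apply, Finsupp.add_apply]
      exact I.add_mem (iha m hm q) (ihb m hm q)

variable (w) in
noncomputable def ρrep (hw : Γ.IsSink w) : (LV k Γ)ᵐᵒᵖ →+* Module.End k (MM k Γ w) where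
  toFun a := Arep k w hw a.unop
  map_one' := Arep_one k hw
  map_mul' a b := by
    show Arep k w hw (b.unop * a.unop) = _
    rw [Arep_mul]
  map_zero' := by
    show Arep k w hw 0 = 0
    unfold Arep
    rw [map_zero]
    rfl
  map_add' a b := Arep_add k hw _ _

section ModPart

variable [instM : Module (LV k Γ)ᵐᵒᵖ (MM k Γ w)] (hw : Γ.IsSink w)

theorem simple_of_isField
    (hsm : ∀ (a : (LV k Γ)ᵐᵒᵖ) (m : MM k Γ w), a • m = Arep k w hw a.unop m)
    (hk : IsField k) : IsSimpleModule (LV k Γ)ᵐᵒᵖ (MM k Γ w) := by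
  haveI : Nontrivial k := ⟨hk.exists_pair_ne⟩
  have hne : (Finsupp.single (wpp Γ w) 1 : MM k Γ w) ≠ 0 := fun h =>
    one_ne_zero (Finsupp.single_eq_zero.mp h)
  haveI : Nontrivial (Submodule (LV k Γ)ᵐᵒᵖ (MM k Γ w)) := by
    refine ⟨⊥, ⊤, fun h => hne ?_⟩
    have : (Finsupp.single (wpp Γ w) 1 : MM k Γ w) ∈ (⊥ : Submodule (LV k Γ)ᵐᵒᵖ (MM k Γ w)) := by
      rw [h]; trivial
    simpa using this
  refine { eq_bot_or_eq_top := ?_ }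
  intro N
  by_cases hbot : N = ⊥
  · exact Or.inl hbot
  · right
    -- N contains a nonzero element
    have hsmulk : ∀ (c : k) (m : MM k Γ w), m ∈ N → c • m ∈ N := by
      intro c m hm
      have h1 : c • m = MulOpposite.op (algebraMap k (LV k Γ) c) • m := by
        rw [hsm]
        exact (Arep_algebraMap k hw c m).symm
      rw [h1]
      exact N.smul_mem _ hm
    obtain ⟨m, hmN, hm0⟩ : ∃ m ∈ N, m ≠ 0 := by
      by_contra h
      push_neg at h
      exact hbot (by
        ext x
        simp only [Submodule.mem_bot]
        exact ⟨fun hx => h x hx, fun hx => hx ▸ N.zero_mem⟩)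
    obtain ⟨p, hp⟩ : ∃ p, p ∈ m.support := by
      by_contra h
      push_neg at h
      exact hm0 (by ext q; simpa using Finsupp.notMem_support_iff.mp (h q))
    have hmp : m p ≠ 0 := Finsupp.mem_support_iff.mp hp
    -- single wpp 1 ∈ N
    have h2 : (Finsupp.single (wpp Γ w) (m p) : MM k Γ w) ∈ N := by
      have h3 := N.smul_mem (MulOpposite.op (pElem (genL k Γ) p.1)) hmN
      rw [hsm] at h3
      simp only [unop_op] at h3
      rwa [Arep_pElem_full k hw p m] at h3
    obtain ⟨d, hd⟩ := hk.mul_inv_cancel hmp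
    have h4 : (Finsupp.single (wpp Γ w) 1 : MM k Γ w) ∈ N := by
      have h5 := hsmulk d _ h2
      rwa [Finsupp.smul_single, smul_eq_mul, mul_comm, hd] at h5
    -- every single is in N
    have h6 : ∀ q : PP Γ w, (Finsupp.single q 1 : MM k Γ w) ∈ N := by
      intro q
      have h7 := N.smul_mem (MulOpposite.op (pStar (genL k Γ) q.1)) h4
      rw [hsm] at h7
      simp only [unop_op] at h7
      rwa [Arep_pStar k hw q] at h7
    rw [eq_top_iff]
    intro m' _
    have hm' : m' = m'.sum fun q c => c • Finsupp.single q 1 := by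
      simp only [Finsupp.smul_single, smul_eq_mul, mul_one, Finsupp.sum_single]
    rw [hm']
    exact Submodule.finsuppSum_mem _ N m' _ (fun q _ => hsmulk _ _ (h6 q))

theorem isField_of_simple
    (hsm : ∀ (a : (LV k Γ)ᵐᵒᵖ) (m : MM k Γ w), a • m = Arep k w hw a.unop m)
    (hs : IsSimpleModule (LV k Γ)ᵐᵒᵖ (MM k Γ w)) : IsField k := by
  haveI := hs
  haveI hMnt : Nontrivial (MM k Γ w) := IsSimpleModule.nontrivial (LV k Γ)ᵐᵒᵖ (MM k Γ w)
  haveI hknt : Nontrivial k := by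
    by_contra h
    rw [not_nontrivial_iff_subsingleton] at h
    exact (not_subsingleton (MM k Γ w)) (by
      constructor
      intro a b
      ext q
      exact Subsingleton.elim _ _)
  refine ⟨exists_pair_ne k, mul_comm, ?_⟩
  intro c hc
  set I : Ideal k := Ideal.span {c} with hI
  -- the submodule of elements with coordinates in I
  let N : Submodule (LV k Γ)ᵐᵒᵖ (MM k Γ w) :=
    { carrier := {m : MM k Γ w | ∀ q, m q ∈ I}
      add_mem' := fun ha hb q => I.add_mem (ha q) (hb q)
      zero_mem' := fun q => I.zero_mem
      smul_mem' := by
        intro a m hm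
        intro q
        rw [hsm]
        exact Arep_coords k hw a.unop I m hm q }
  have hN1 : (Finsupp.single (wpp Γ w) c : MM k Γ w) ∈ N := by
    intro q
    rw [Finsupp.single_apply]
    split
    · exact Ideal.mem_span_singleton_self c
    · exact I.zero_mem
  have hNbot : N ≠ ⊥ := by
    intro h
    have h2 : (Finsupp.single (wpp Γ w) c : MM k Γ w) = 0 := by
      have := h ▸ hN1
      simpa using this
    exact hc (by simpa using (Finsupp.single_eq_zero).mp h2)
  have hNtop : N = ⊤ := (hs.toIsSimpleOrder.2 N).resolve_left hNbot
  have h3 : (Finsupp.single (wpp Γ w) 1 : MM k Γ w) ∈ N := by rw [hNtop]; trivial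
  have h4 : (1 : k) ∈ I := by
    have := h3 (wpp Γ w)
    rwa [Finsupp.single_apply, if_pos rfl] at this
  obtain ⟨d, hd⟩ := Ideal.mem_span_singleton.mp h4
  exact ⟨d, hd.symm⟩

end ModPart


variable (w) in
noncomputable def ψmap (hw : Γ.IsSink w) : ↥(SS k Γ w) →ₗ[k] MM k Γ w :=
  (Φmap k w hw).comp (SS k Γ w).subtype

theorem ψmap_eq (hw : Γ.IsSink w) :
    ψmap k w hw = ((Module.Basis.span (li k hw)).equiv
      (Finsupp.basisSingleOne : Module.Basis (PP Γ w) k (MM k Γ w)) (Equiv.refl _) :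
        ↥(SS k Γ w) ≃ₗ[k] MM k Γ w).toLinearMap := by
  apply Module.Basis.ext (Module.Basis.span (li k hw))
  intro p
  have h1 : ψmap k w hw (Module.Basis.span (li k hw) p) = Finsupp.single p 1 := by
    show Φmap k w hw ((Module.Basis.span (li k hw) p : LV k Γ)) = _
    rw [Module.Basis.span_apply]
    exact Φmap_pStar k hw p
  have h2 : ((Module.Basis.span (li k hw)).equiv
      (Finsupp.basisSingleOne : Module.Basis (PP Γ w) k (MM k Γ w)) (Equiv.refl _))
      (Module.Basis.span (li k hw) p) = Finsupp.single p 1 := by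
    rw [Module.Basis.equiv_apply]
    exact congrFun (Finsupp.coe_basisSingleOne (R := k) (ι := PP Γ w)) p
  exact h1.trans h2.symm

theorem ψmap_bijective (hw : Γ.IsSink w) : Function.Bijective (ψmap k w hw) := by
  rw [ψmap_eq]
  exact ((Module.Basis.span (li k hw)).equiv
      (Finsupp.basisSingleOne : Module.Basis (PP Γ w) k (MM k Γ w)) (Equiv.refl _)).bijective

end Fixed

end LPAProof

open DGraph in
/-- for a sink `w`, `{p* : t(p) = w}` is a `k`-basis of the right ideal
`w L_k(Γ)`, and `w L_k(Γ)` is a simple right `L_k(Γ)`-module iff `k` is a field. -/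
theorem sink_right_ideal_basis_and_simple (k : Type) [CommRing k] (Γ : DGraph)
    (hrf : Γ.RowFinite) (w : Γ.V) (hw : Γ.IsSink w) :
    (∃ b : Module.Basis {p : Path Γ // p.trg = w} k
        ↥(Submodule.span k (Set.range fun p : {p : Path Γ // p.trg = w} =>
            pStar (genL k Γ) p.1)),
      ∀ p, (b p : LV k Γ) = pStar (genL k Γ) p.1) ∧
    ((Submodule.span k (Set.range fun p : {p : Path Γ // p.trg = w} =>
        pStar (genL k Γ) p.1) : Set (LV k Γ))
      = (rIdeal (LV k Γ) (genL k Γ (Gen.vert w)) : Set (LV k Γ))) ∧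
    (IsSimpleModule (LV k Γ)ᵐᵒᵖ ↥(rIdeal (LV k Γ) (genL k Γ (Gen.vert w)))
      ↔ IsField k) := by
  classical
  open LPAProof in
  refine ⟨⟨Module.Basis.span (li k hw), fun p => congrArg Subtype.val (Module.Basis.span_apply (li k hw) p)⟩,
    SS_eq_rIdeal k hw, ?_⟩
  letI instM : Module (LV k Γ)ᵐᵒᵖ (MM k Γ w) := Module.compHom _ (ρrep k w hw)
  have hsm : ∀ (a : (LV k Γ)ᵐᵒᵖ) (m : MM k Γ w), a • m = Arep k w hw a.unop m :=
    fun a m => rfl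
  have hset := SS_eq_rIdeal k hw
  -- the module map from the right ideal to MM
  let f : ↥(rIdeal (LV k Γ) (genL k Γ (Gen.vert w))) →ₗ[(LV k Γ)ᵐᵒᵖ] MM k Γ w :=
    { toFun := fun x => Φmap k w hw x.1
      map_add' := fun x y => by
        show Φmap k w hw (x.1 + y.1) = _
        rw [map_add]
      map_smul' := fun a x => by
        show Φmap k w hw (x.1 * a.unop) = a • Φmap k w hw x.1
        show Arep k w hw (x.1 * a.unop) (Finsupp.single (wpp Γ w) 1) = _
        rw [Arep_mul, Module.End.mul_apply, hsm]
        rfl }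
  have hmemS : ∀ x : ↥(rIdeal (LV k Γ) (genL k Γ (Gen.vert w))), x.1 ∈ SS k Γ w := by
    intro x
    have : x.1 ∈ (rIdeal (LV k Γ) (genL k Γ (Gen.vert w)) : Set (LV k Γ)) := x.2
    rw [← hset] at this
    exact this
  have hbij : Function.Bijective f := by
    constructor
    · intro x y hxy
      have h1 : ψmap k w hw ⟨x.1, hmemS x⟩ = ψmap k w hw ⟨y.1, hmemS y⟩ := hxy
      have h2 := (ψmap_bijective k hw).1 h1
      have h3 : x.1 = y.1 := congrArg (fun z : ↥(LPAProof.SS k Γ w) => z.1) h2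
      exact Subtype.ext h3
    · intro m
      obtain ⟨s, hs⟩ := (ψmap_bijective k hw).2 m
      have hmem : s.1 ∈ (rIdeal (LV k Γ) (genL k Γ (Gen.vert w)) : Set (LV k Γ)) := by
        rw [← hset]; exact s.2
      exact ⟨⟨s.1, hmem⟩, hs⟩
  let e := LinearEquiv.ofBijective f hbij
  constructor
  · intro hs
    haveI : IsSimpleModule (LV k Γ)ᵐᵒᵖ ↥(rIdeal (LV k Γ) (genL k Γ (Gen.vert w))) := hs
    exact isField_of_simple k hw hsm
      (IsSimpleModule.congr (R := (LV k Γ)ᵐᵒᵖ) (M := MM k Γ w)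
        (N := ↥(rIdeal (LV k Γ) (genL k Γ (Gen.vert w)))) e.symm)
  · intro hk
    haveI := simple_of_isField k hw hsm hk
    exact IsSimpleModule.congr (R := (LV k Γ)ᵐᵒᵖ)
      (M := ↥(rIdeal (LV k Γ) (genL k Γ (Gen.vert w)))) (N := MM k Γ w) e
end
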